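/- arXiv:1501.06130 — 5 statements merged into one kernel-verified Lean document; each statement's English description precedes it below -/
import Mathlib

section
/- Let D ⊆ ℝ^d be an open set, let R₀ > 0, and let x, y ∈ D be such that there exist distinct connected components D₁, …, D_m of D with x ∈ D₁, y ∈ D_m, and dist(D_i, D_{i+1}) < R₀ for every 1 ≤ i ≤ m − 1. Then there exist an integer m' ≥ 1, constants ε ∈ (0, 1) and r₀ ∈ (0, εR₀/4), and points x₁, …, x_{m'} ∈ D such that: (i) x ∈ B(x₁, r₀) and y ∈ B(x_{m'}, r₀); (ii) |x_j − x_{j+1}| ≤ (1 − ε)R₀ for every 1 ≤ j ≤ m' − 1; (iii) the balls B(x₁, r₀), …, B(x_{m'}, r₀) are pairwise disjoint and each ball B(x_j, r₀) is contained in D. -/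
open Metric


lemma reach_of_preconnected {X : Type*} [PseudoMetricSpace X] {C : Set X}
    (hC : IsPreconnected C) {δ : ℝ} (hδ : 0 < δ) {p q : X} (hp : p ∈ C) (hq : q ∈ C) :
    Relation.ReflTransGen (fun a b => a ∈ C ∧ b ∈ C ∧ dist a b ≤ δ) p q := by
  set r := fun a b : X => a ∈ C ∧ b ∈ C ∧ dist a b ≤ δ with hr
  by_contra hcon
  set u := ⋃ s ∈ {z | z ∈ C ∧ Relation.ReflTransGen r p z}, ball s δ with hu_def
  set v := ⋃ s ∈ {z | z ∈ C ∧ ¬ Relation.ReflTransGen r p z}, ball s δ with hv_def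
  have hu : IsOpen u := isOpen_biUnion fun _ _ => isOpen_ball
  have hv : IsOpen v := isOpen_biUnion fun _ _ => isOpen_ball
  have hcov : C ⊆ u ∪ v := by
    intro z hz
    by_cases h : Relation.ReflTransGen r p z
    · exact Or.inl (Set.mem_biUnion ⟨hz, h⟩ (mem_ball_self hδ))
    · exact Or.inr (Set.mem_biUnion ⟨hz, h⟩ (mem_ball_self hδ))
  have h1 : (C ∩ u).Nonempty :=
    ⟨p, hp, Set.mem_biUnion ⟨hp, Relation.ReflTransGen.refl⟩ (mem_ball_self hδ)⟩
  have h2 : (C ∩ v).Nonempty :=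
    ⟨q, hq, Set.mem_biUnion ⟨hq, hcon⟩ (mem_ball_self hδ)⟩
  obtain ⟨z, hzC, hzu, hzv⟩ := hC u v hu hv hcov h1 h2
  obtain ⟨s, ⟨hsC, hsreach⟩, hzs⟩ := Set.mem_iUnion₂.1 hzu
  obtain ⟨t, ⟨htC, htreach⟩, hzt⟩ := Set.mem_iUnion₂.1 hzv
  have hzreach : Relation.ReflTransGen r p z :=
    hsreach.tail ⟨hsC, hzC, by rw [dist_comm]; exact le_of_lt hzs⟩
  exact htreach (hzreach.tail ⟨hzC, htC, le_of_lt hzt⟩)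

lemma chain_dedup {X : Type*} {r : X → X → Prop} (l : List X) (a : X)
    (h : List.Chain r a l) :
    ∃ l' : List X, List.Chain r a l' ∧
      (a :: l').getLast (List.cons_ne_nil _ _) = (a :: l).getLast (List.cons_ne_nil _ _) ∧
      (a :: l').Nodup ∧ ∀ z ∈ l', z ∈ l := by
  by_cases hal : a ∈ l
  · obtain ⟨l₁, l₂, rfl⟩ := List.append_of_mem hal
    have h2 : List.Chain r a l₂ := (List.isChain_cons_split.1 h).2
    obtain ⟨l', c1, c2, c3, c4⟩ := chain_dedup l₂ a h2
    refine ⟨l', c1, ?_, c3,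
      fun z hz => List.mem_append.2 (Or.inr (List.mem_cons_of_mem _ (c4 z hz)))⟩
    rw [c2]
    have : a :: (l₁ ++ a :: l₂) = (a :: l₁) ++ (a :: l₂) := by simp
    rw [List.getLast_congr _ _ this, List.getLast_append_of_right_ne_nil _ _ (List.cons_ne_nil _ _)]
    simp
  · cases l with
    | nil =>
      exact ⟨[], h, rfl, by simp, by simp⟩
    | cons b t =>
      replace h := List.chain_cons.1 h
      obtain ⟨l', c1, c2, c3, c4⟩ := chain_dedup t b h.2
      have hanb : a ∉ b :: l' := by
        intro hmem
        rcases List.mem_cons.1 hmem with h' | h'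
        · exact hal (h' ▸ List.mem_cons_self)
        · exact hal (List.mem_cons_of_mem _ (c4 a h'))
      refine ⟨b :: l', List.chain_cons.2 ⟨h.1, c1⟩, ?_, List.nodup_cons.2 ⟨hanb, c3⟩, ?_⟩
      · rw [List.getLast_cons_cons, List.getLast_cons_cons, c2]
      · intro z hz
        rcases List.mem_cons.1 hz with h' | h'
        · exact h' ▸ List.mem_cons_self
        · exact List.mem_cons_of_mem _ (c4 z h')
termination_by l.length
decreasing_by
  all_goals subst_vars
  all_goals simp [List.length_append]
  all_goals omega

lemma chain_mem_D {X : Type*} {D : Set X} {r : X → X → Prop}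
    (hr : ∀ a b, r a b → b ∈ D) :
    ∀ (l : List X) (a : X), List.Chain r a l → ∀ z ∈ l, z ∈ D := by
  intro l
  induction l with
  | nil => intro a _ z hz; simp at hz
  | cons b t ih =>
    intro a h z hz
    replace h := List.chain_cons.1 h
    rcases List.mem_cons.1 hz with h' | h'
    · exact h' ▸ hr a b h.1
    · exact ih b h.2 z h'

/-- If `x, y` in an open set `D ⊆ ℝ^d` are linked by a chain of distinct
connected components of `D` at mutual distance `< R₀`, then there are points
`x₁, …, x_{m'} ∈ D`, `ε ∈ (0,1)` and `r₀ ∈ (0, εR₀/4)` such that `x ∈ B(x₁, r₀)`,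
`y ∈ B(x_{m'}, r₀)`, consecutive points are at distance `≤ (1-ε)R₀`, and the balls
`B(x_j, r₀)` are pairwise disjoint and contained in `D`. -/
theorem exists_chain_of_roughly_connected
    {d : ℕ} (D : Set (EuclideanSpace ℝ (Fin d))) (hD : IsOpen D)
    (R₀ : ℝ) (hR₀ : 0 < R₀)
    (x y : EuclideanSpace ℝ (Fin d)) (hx : x ∈ D) (hy : y ∈ D)
    (m : ℕ) (hm : 1 ≤ m) (Dc : ℕ → Set (EuclideanSpace ℝ (Fin d)))
    (hcomp : ∀ i < m, ∃ p ∈ D, Dc i = connectedComponentIn D p)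
    (hdistinct : ∀ i j, i < m → j < m → i ≠ j → Dc i ≠ Dc j)
    (hxD : x ∈ Dc 0) (hyD : y ∈ Dc (m - 1))
    (hclose : ∀ i, i + 1 < m → ∃ a ∈ Dc i, ∃ b ∈ Dc (i + 1), dist a b < R₀) :
    ∃ (m' : ℕ) (ε r₀ : ℝ) (pts : ℕ → EuclideanSpace ℝ (Fin d)),
      1 ≤ m' ∧ 0 < ε ∧ ε < 1 ∧ 0 < r₀ ∧ r₀ < ε * R₀ / 4 ∧
      (∀ j < m', pts j ∈ D) ∧
      x ∈ ball (pts 0) r₀ ∧ y ∈ ball (pts (m' - 1)) r₀ ∧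
      (∀ j, j + 1 < m' → dist (pts j) (pts (j + 1)) ≤ (1 - ε) * R₀) ∧
      (∀ i j, i < m' → j < m' → i ≠ j →
        Disjoint (ball (pts i) r₀) (ball (pts j) r₀)) ∧
      (∀ j < m', ball (pts j) r₀ ⊆ D) := by
  classical
  choose! a ha b hb hab using hclose
  -- the max jump distance
  set f : ℕ → ℝ := fun i => if i + 1 < m then dist (a i) (b i) else 0 with hf
  have hne : (Finset.range m).Nonempty := ⟨0, Finset.mem_range.2 (by omega)⟩
  set M : ℝ := (Finset.range m).sup' hne f with hM
  have hM0 : 0 ≤ M := by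
    refine le_trans ?_ (Finset.le_sup' f (Finset.mem_range.2 (show 0 < m by omega)))
    simp only [hf]; split_ifs <;> positivity
  have hMR : M < R₀ := by
    rw [hM, Finset.sup'_lt_iff]
    intro i _
    simp only [hf]
    split_ifs with h
    · exact hab i h
    · exact hR₀
  have hfM : ∀ i, i + 1 < m → dist (a i) (b i) ≤ M := by
    intro i hi
    have h1 : f i = dist (a i) (b i) := by simp [hf, hi]
    have h2 : f i ≤ (Finset.range m).sup' hne f :=
      Finset.le_sup' f (Finset.mem_range.2 (show i < m by omega))
    rw [hM]; rw [h1] at h2; exact h2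
  set ε : ℝ := (R₀ - M) / (2 * R₀) with hε
  have hε0 : 0 < ε := by apply div_pos <;> linarith
  have hε1 : ε < 1 := by
    rw [hε, div_lt_one (by linarith)]; linarith
  set L : ℝ := (1 - ε) * R₀ with hL
  have hL0 : 0 < L := by
    rw [hL]; nlinarith
  have hML : M ≤ L := by
    have hεR : ε * R₀ = (R₀ - M) / 2 := by rw [hε]; field_simp
    have h2 : (1 - ε) * R₀ = R₀ - ε * R₀ := by ring
    linarith
  set r : EuclideanSpace ℝ (Fin d) → EuclideanSpace ℝ (Fin d) → Prop :=
    fun u v => u ∈ D ∧ v ∈ D ∧ dist u v ≤ L with hrdef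
  have hDcD : ∀ i < m, Dc i ⊆ D := by
    intro i hi
    obtain ⟨p, _, hp2⟩ := hcomp i hi
    rw [hp2]; exact connectedComponentIn_subset _ _
  have hDcPre : ∀ i < m, IsPreconnected (Dc i) := by
    intro i hi
    obtain ⟨p, _, hp2⟩ := hcomp i hi
    rw [hp2]; exact isPreconnected_connectedComponentIn
  have hwithin : ∀ i < m, ∀ p ∈ Dc i, ∀ q ∈ Dc i, Relation.ReflTransGen r p q := by
    intro i hi p hp q hq
    refine Relation.ReflTransGen.mono (p := r) ?_ _ _ (reach_of_preconnected (hDcPre i hi) hL0 hp hq)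
    rintro u v ⟨h1, h2, h3⟩
    exact ⟨hDcD i hi h1, hDcD i hi h2, h3⟩
  have key : ∀ i < m, ∀ q ∈ Dc i, Relation.ReflTransGen r x q := by
    intro i
    induction i with
    | zero => intro hi q hq; exact hwithin 0 hi x hxD q hq
    | succ i ih =>
      intro hi q hq
      have hi' : i < m := by omega
      have hii : i + 1 < m := hi
      refine Relation.ReflTransGen.trans (ih hi' (a i) (ha i hii)) ?_
      refine Relation.ReflTransGen.trans (Relation.ReflTransGen.single
        ⟨hDcD i hi' (ha i hii), hDcD (i+1) hi (hb i hii), le_trans (hfM i hii) hML⟩) ?_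
      exact hwithin (i+1) hi (b i) (hb i hii) q hq
  have hxy : Relation.ReflTransGen r x y := by
    rcases Nat.eq_or_lt_of_le hm with h | h
    · exact key (m - 1) (by omega) y hyD
    · exact key (m - 1) (by omega) y hyD
  obtain ⟨l0, hl0c, hl0last⟩ := List.exists_isChain_cons_of_relationReflTransGen hxy
  obtain ⟨l, hlc, hllast, hlnd, hlmem⟩ := chain_dedup l0 x hl0c
  set ch : List (EuclideanSpace ℝ (Fin d)) := x :: l with hch
  set n : ℕ := ch.length with hn
  have hn1 : 1 ≤ n := by simp [hn, hch]
  set pts : ℕ → EuclideanSpace ℝ (Fin d) := fun j => ch.getD j x with hpts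
  have hptsel : ∀ j (hj : j < n), pts j = ch[j] := fun j hj => List.getD_eq_getElem ch x hj
  have hchD : ∀ z ∈ ch, z ∈ D := by
    intro z hz
    rcases List.mem_cons.1 hz with h' | h'
    · exact h' ▸ hx
    · exact chain_mem_D (fun u v huv => huv.2.1) l x hlc z h'
  have hptsD : ∀ j < n, pts j ∈ D := by
    intro j hj
    rw [hptsel j hj]
    exact hchD _ (List.getElem_mem _)
  have hpts0 : pts 0 = x := by
    rw [hptsel 0 (by omega)]; simp [hch]
  have hptslast : pts (n - 1) = y := by
    rw [hptsel (n-1) (by omega)]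
    rw [← List.getLast_eq_getElem (l := ch) (by simp [hch])]
    rw [hch] at *
    rw [hllast, hl0last]
  have hconsec : ∀ j, j + 1 < n → dist (pts j) (pts (j + 1)) ≤ (1 - ε) * R₀ := by
    intro j hj
    have hch' : List.Chain' r ch := hlc
    have := List.isChain_iff_getElem.1 hch' j (by omega)
    rw [hptsel j (by omega), hptsel (j+1) hj]
    simpa using this.2.2
  have hinj : ∀ i j, i < n → j < n → i ≠ j → pts i ≠ pts j := by
    intro i j hi hj hij
    rw [hptsel i hi, hptsel j hj]
    intro hcontra
    exact hij (Fin.mk_eq_mk.1 (List.nodup_iff_injective_get.1 hlnd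
      (by simpa using hcontra : ch.get ⟨i, hi⟩ = ch.get ⟨j, hj⟩)))
  -- choose radii
  have hballex : ∀ j, j < n → ∃ ρ, 0 < ρ ∧ ball (pts j) ρ ⊆ D := by
    intro j hj
    obtain ⟨ρ, hρ1, hρ2⟩ := Metric.isOpen_iff.1 hD (pts j) (hptsD j hj)
    exact ⟨ρ, hρ1, hρ2⟩
  choose! ρ hρpos hρsub using hballex
  have hneN : (Finset.range n).Nonempty := ⟨0, Finset.mem_range.2 (by omega)⟩
  set ρmin : ℝ := (Finset.range n).inf' hneN ρ with hρmin
  have hρmin0 : 0 < ρmin := by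
    rw [hρmin, Finset.lt_inf'_iff]
    intro i hi
    exact hρpos i (Finset.mem_range.1 hi)
  set s : Finset (ℕ × ℕ) :=
    (Finset.range n ×ˢ Finset.range n).filter (fun p => p.1 ≠ p.2) with hs
  set d0 : ℝ := if hsn : s.Nonempty then s.inf' hsn (fun p => dist (pts p.1) (pts p.2)) else 1
    with hd0
  have hd00 : 0 < d0 := by
    rw [hd0]
    split_ifs with hsn
    · rw [Finset.lt_inf'_iff]
      rintro ⟨i, j⟩ hij
      simp only [hs, Finset.mem_filter, Finset.mem_product, Finset.mem_range] at hij
      exact dist_pos.2 (hinj i j hij.1.1 hij.1.2 hij.2)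
    · norm_num
  have hd0le : ∀ i j, i < n → j < n → i ≠ j → d0 ≤ dist (pts i) (pts j) := by
    intro i j hi hj hij
    have hmem : (i, j) ∈ s := by
      simp only [hs, Finset.mem_filter, Finset.mem_product, Finset.mem_range]
      exact ⟨⟨hi, hj⟩, hij⟩
    rw [hd0]
    rw [dif_pos ⟨(i,j), hmem⟩]
    exact Finset.inf'_le _ hmem
  set r₀ : ℝ := min (ε * R₀ / 8) (min ρmin (d0 / 2)) with hr₀
  have hr₀0 : 0 < r₀ := by
    rw [hr₀]
    refine lt_min (by positivity) (lt_min hρmin0 (by positivity))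
  refine ⟨n, ε, r₀, pts, hn1, hε0, hε1, hr₀0, ?_, hptsD, ?_, ?_, hconsec, ?_, ?_⟩
  · calc r₀ ≤ ε * R₀ / 8 := min_le_left _ _
      _ < ε * R₀ / 4 := by nlinarith
  · rw [mem_ball, hpts0, dist_self]; exact hr₀0
  · rw [mem_ball, hptslast, dist_self]; exact hr₀0
  · intro i j hi hj hij
    refine ball_disjoint_ball ?_
    have := hd0le i j hi hj hij
    have h1 : r₀ ≤ d0 / 2 := le_trans (min_le_right _ _) (min_le_right _ _)
    linarith
  · intro j hj
    refine Set.Subset.trans (ball_subset_ball ?_) (hρsub j hj)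
    exact le_trans (min_le_right _ _) (le_trans (min_le_left _ _) (Finset.inf'_le _ (Finset.mem_range.2 hj)))
end

section
/- Let D ⊆ ℝ^d be a nonempty bounded open set and let R₀ > 0. Then there exist an integer n ≥ 1, open sets D̃₁, …, D̃_n, a constant r₀ with 0 < r₀ < R₀/8, and points x₁, …, x_n, such that: (i) D = D̃₁ ∪ ⋯ ∪ D̃_n; (ii) for every 1 ≤ i ≤ n, any two points of D̃_i are at distance at most R₀/2 from each other; (iii) for every 1 ≤ i ≤ n, the closed ball of center x_i and radius 2r₀ is contained in D̃_i. -/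
open Metric

/-- A nonempty bounded open set `D ⊆ ℝ^d` can be written as a finite
union of open sets `D̃₁, …, D̃_n`, each of diameter at most `R₀/2`, and each
containing a closed ball of radius `2r₀` for some common `0 < r₀ < R₀/8`. -/
theorem exists_finite_cover_of_bounded_open
    {d : ℕ} (D : Set (EuclideanSpace ℝ (Fin d))) (hD : IsOpen D)
    (hne : D.Nonempty) (hbd : Bornology.IsBounded D) (R₀ : ℝ) (hR₀ : 0 < R₀) :
    ∃ (n : ℕ) (Dt : Fin n → Set (EuclideanSpace ℝ (Fin d)))
      (r₀ : ℝ) (xs : Fin n → EuclideanSpace ℝ (Fin d)),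
      1 ≤ n ∧ 0 < r₀ ∧ r₀ < R₀ / 8 ∧
      (∀ i, IsOpen (Dt i)) ∧
      D = ⋃ i, Dt i ∧
      (∀ i, ∀ a ∈ Dt i, ∀ b ∈ Dt i, dist a b ≤ R₀ / 2) ∧
      (∀ i, closedBall (xs i) (2 * r₀) ⊆ Dt i) := by
  obtain ⟨z₀, hz₀⟩ := hne
  obtain ⟨t, ht⟩ := hbd.isCompact_closure.elim_finite_subcover
      (fun y => ball y (R₀ / 8)) (fun _ => isOpen_ball)
      (fun x _ => Set.mem_iUnion.2 ⟨x, mem_ball_self (by positivity)⟩)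
  set L := z₀ :: t.toList with hL
  set n := L.length with hn
  have hn1 : 1 ≤ n := Nat.succ_le_succ (Nat.zero_le _)
  haveI : Nonempty (Fin n) := ⟨⟨0, by omega⟩⟩
  set y : Fin n → EuclideanSpace ℝ (Fin d) := fun i => L.get i with hy
  set A : Fin n → Set (EuclideanSpace ℝ (Fin d)) :=
    fun i => D ∩ ball (y i) (R₀ / 8) with hA
  classical
  set z : Fin n → EuclideanSpace ℝ (Fin d) :=
    fun i => if h : (A i).Nonempty then h.some else z₀ with hz'
  have hzA : ∀ i, (A i).Nonempty → z i ∈ A i := by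
    intro i h
    simp only [hz', dif_pos h]
    exact h.some_mem
  have hzD : ∀ i, z i ∈ D := by
    intro i
    by_cases h : (A i).Nonempty
    · exact (hzA i h).1
    · simp only [hz', dif_neg h]; exact hz₀
  choose ε hε hball using fun i : Fin n => Metric.isOpen_iff.1 hD (z i) (hzD i)
  set r₀ : ℝ := min (R₀ / 32) (Finset.univ.inf' Finset.univ_nonempty fun i => ε i / 6)
    with hr
  have hr0 : 0 < r₀ := by
    refine lt_min (by positivity) ?_
    rw [Finset.lt_inf'_iff]
    intro i _
    have := hε i
    positivity
  have hr32 : r₀ ≤ R₀ / 32 := min_le_left _ _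
  have hrle : ∀ i, r₀ ≤ ε i / 6 :=
    fun i => (min_le_right _ _).trans (Finset.inf'_le _ (Finset.mem_univ i))
  have hball3 : ∀ i, ball (z i) (3 * r₀) ⊆ D := by
    intro i
    refine (ball_subset_ball ?_).trans (hball i)
    have := hε i
    have := hrle i
    linarith
  refine ⟨n, fun i => A i ∪ ball (z i) (3 * r₀), r₀, z, hn1, hr0, by linarith, ?_, ?_, ?_, ?_⟩
  · exact fun i => ((hD.inter isOpen_ball).union isOpen_ball)
  · apply Set.Subset.antisymm
    · intro x hx
      have hx' : x ∈ ⋃ c ∈ t, ball c (R₀ / 8) := ht (subset_closure hx)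
      obtain ⟨c, hct, hxc⟩ := Set.mem_iUnion₂.1 hx'
      have hcL : c ∈ L := List.mem_cons_of_mem _ (Finset.mem_toList.2 hct)
      obtain ⟨i, hi⟩ := List.mem_iff_get.1 hcL
      refine Set.mem_iUnion.2 ⟨i, Or.inl ⟨hx, ?_⟩⟩
      have hyc : y i = c := hi
      rw [hyc]
      exact hxc
    · exact Set.iUnion_subset fun i =>
        Set.union_subset Set.inter_subset_left (hball3 i)
  · intro i a ha b hb
    have key : ∀ p, p ∈ A i ∪ ball (z i) (3 * r₀) → dist p (z i) ≤ R₀ / 4 := by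
      intro p hp
      rcases hp with hp | hp
      · have hAi : (A i).Nonempty := ⟨p, hp⟩
        have hzi := hzA i hAi
        have h1 : dist p (y i) < R₀ / 8 := mem_ball.1 hp.2
        have h2 : dist (z i) (y i) < R₀ / 8 := mem_ball.1 hzi.2
        calc dist p (z i) ≤ dist p (y i) + dist (z i) (y i) := dist_triangle_right _ _ _
          _ ≤ R₀ / 4 := by linarith
      · have : dist p (z i) < 3 * r₀ := mem_ball.1 hp
        linarith
    calc dist a b ≤ dist a (z i) + dist b (z i) := dist_triangle_right _ _ _
      _ ≤ R₀ / 2 := by linarith [key a ha, key b hb]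
  · intro i
    refine Set.Subset.trans ?_ Set.subset_union_right
    exact (closedBall_subset_ball (by linarith)).trans (subset_refl _)
end

section
/- Let ν be a Lévy measure on ℝ^d such that B(0, R₀) ⊆ supp(ν) for some R₀ > 0. If f ∈ L²(ℝ^d) vanishes almost everywhere outside some bounded set and satisfies ∫_{ℝ^d} ∫_{ℝ^d} ( f(x+z) − f(x) )² ν(dz) dx = 0, then f = 0 almost everywhere. -/
open MeasureTheory Metric
open scoped ENNReal

set_option maxHeartbeats 1600000 in
/-- Let `ν` be a Lévy measure on `ℝ^d` with `B(0, R₀) ⊆ supp(ν)`. If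
`f ∈ L²(ℝ^d)` vanishes a.e. outside a bounded set and
`∫∫ (f(x+z) - f(x))² ν(dz) dx = 0`, then `f = 0` a.e. -/
theorem eq_zero_of_dirichlet_form_eq_zero
    {d : ℕ} (ν : Measure (EuclideanSpace ℝ (Fin d)))
    (hν0 : ν {0} = 0)
    (hνint : ∫⁻ z, ENNReal.ofReal (min 1 (‖z‖ ^ 2)) ∂ν < ⊤)
    (R₀ : ℝ) (hR₀ : 0 < R₀)
    (hsupp : ∀ x : EuclideanSpace ℝ (Fin d), ‖x‖ < R₀ → ∀ ε > (0 : ℝ), 0 < ν (ball x ε))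
    (f : EuclideanSpace ℝ (Fin d) → ℝ) (hf : MemLp f 2 volume)
    (hbd : ∃ s : Set (EuclideanSpace ℝ (Fin d)), Bornology.IsBounded s ∧
      ∀ᵐ x ∂(volume : Measure (EuclideanSpace ℝ (Fin d))), x ∉ s → f x = 0)
    (hzero : ∫⁻ x, ∫⁻ z, ENNReal.ofReal ((f (x + z) - f x) ^ 2) ∂ν
        ∂(volume : Measure (EuclideanSpace ℝ (Fin d))) = 0) :
    f =ᵐ[(volume : Measure (EuclideanSpace ℝ (Fin d)))] 0 := by
  classical
  rcases Nat.eq_zero_or_pos d with hd0 | hd0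
  · -- degenerate case d = 0 : the hypotheses are contradictory
    exfalso
    subst hd0
    haveI : Subsingleton (EuclideanSpace ℝ (Fin 0)) := ⟨fun a b => PiLp.ext fun i => i.elim0⟩
    have h1 := hsupp 0 (by simpa using hR₀) 1 one_pos
    have hsub : ball (0 : EuclideanSpace ℝ (Fin 0)) 1 ⊆ {0} := fun z _ => Subsingleton.elim z 0
    have h2 : ν (ball (0 : EuclideanSpace ℝ (Fin 0)) 1) = 0 :=
      le_antisymm (le_trans (measure_mono hsub) hν0.le) zero_le
    rw [h2] at h1; exact lt_irrefl _ h1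
  -- ν is sigma-finite
  haveI : SigmaFinite ν := by
    apply Measure.sigmaFinite_of_countable
      (S := Set.range (fun n : ℕ => {(0 : EuclideanSpace ℝ (Fin d))} ∪
        {z : EuclideanSpace ℝ (Fin d) | 1/(n+1 : ℝ) ≤ ‖z‖}))
    · exact Set.countable_range _
    · rintro s ⟨n, rfl⟩
      have hc : (0:ℝ) < 1/(n+1:ℝ) := by positivity
      have key : ENNReal.ofReal (min 1 ((1/(n+1:ℝ))^2)) *
          ν {z : EuclideanSpace ℝ (Fin d) | 1/(n+1 : ℝ) ≤ ‖z‖}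
          ≤ ∫⁻ z, ENNReal.ofReal (min 1 (‖z‖ ^ 2)) ∂ν := by
        calc ENNReal.ofReal (min 1 ((1/(n+1:ℝ))^2)) *
            ν {z : EuclideanSpace ℝ (Fin d) | 1/(n+1 : ℝ) ≤ ‖z‖}
            = ∫⁻ _ in {z : EuclideanSpace ℝ (Fin d) | 1/(n+1 : ℝ) ≤ ‖z‖},
                ENNReal.ofReal (min 1 ((1/(n+1:ℝ))^2)) ∂ν := by rw [setLIntegral_const]
          _ ≤ ∫⁻ z in {z : EuclideanSpace ℝ (Fin d) | 1/(n+1 : ℝ) ≤ ‖z‖},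
                ENNReal.ofReal (min 1 (‖z‖ ^ 2)) ∂ν := by
              refine setLIntegral_mono (by measurability) fun z hz => ?_
              exact ENNReal.ofReal_le_ofReal (min_le_min le_rfl (by
                have : (1/(n+1:ℝ)) ≤ ‖z‖ := hz
                nlinarith [norm_nonneg z, hc]))
          _ ≤ _ := setLIntegral_le_lintegral _ _
      have hfin : ν {z : EuclideanSpace ℝ (Fin d) | 1/(n+1 : ℝ) ≤ ‖z‖} < ⊤ := by
        by_contra h
        push_neg at h
        have h' : ν {z : EuclideanSpace ℝ (Fin d) | 1/(n+1 : ℝ) ≤ ‖z‖} = ⊤ := top_le_iff.mp h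
        rw [h', ENNReal.mul_top (by simp [ENNReal.ofReal_eq_zero]; positivity)] at key
        exact absurd (top_le_iff.mp key) (by intro hh; rw [hh] at hνint; exact lt_irrefl _ hνint)
      calc ν ({0} ∪ {z : EuclideanSpace ℝ (Fin d) | 1/(n+1 : ℝ) ≤ ‖z‖})
          ≤ ν {0} + ν {z : EuclideanSpace ℝ (Fin d) | 1/(n+1 : ℝ) ≤ ‖z‖} := measure_union_le _ _
        _ < ⊤ := by rw [hν0]; simpa using hfin
    · apply Set.eq_univ_of_forall
      intro z
      rcases eq_or_ne z 0 with rfl | hz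
      · exact ⟨_, ⟨0, rfl⟩, Or.inl rfl⟩
      · have hz' : 0 < ‖z‖ := norm_pos_iff.mpr hz
        obtain ⟨n, hn⟩ := exists_nat_one_div_lt hz'
        exact ⟨_, ⟨n, rfl⟩, Or.inr hn.le⟩
  -- translation of a.e. statements
  have htrans : ∀ (z : EuclideanSpace ℝ (Fin d)) (Q : EuclideanSpace ℝ (Fin d) → Prop),
      (∀ᵐ x ∂(volume : Measure (EuclideanSpace ℝ (Fin d))), Q x) →
      ∀ᵐ x ∂(volume : Measure (EuclideanSpace ℝ (Fin d))), Q (x + z) := by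
    intro z Q hQ
    have h0 : (volume : Measure (EuclideanSpace ℝ (Fin d))) {x | ¬ Q x} = 0 := ae_iff.mp hQ
    have := (measurePreserving_add_right
      (volume : Measure (EuclideanSpace ℝ (Fin d))) z).quasiMeasurePreserving.preimage_null h0
    exact ae_iff.mpr this
  -- Fubini: for ν-a.e. z, translation by z leaves f a.e. invariant
  have hae : ∀ᵐ z ∂ν, ∀ᵐ x ∂(volume : Measure (EuclideanSpace ℝ (Fin d))),
      f (x + z) = f x := by
    have hfm := hf.aestronglyMeasurable
    set g : EuclideanSpace ℝ (Fin d) → ℝ := hfm.mk f with hg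
    have hgm : Measurable g := hfm.stronglyMeasurable_mk.measurable
    have hfg : f =ᵐ[(volume : Measure (EuclideanSpace ℝ (Fin d)))] g := hfm.ae_eq_mk
    set N : Set (EuclideanSpace ℝ (Fin d)) :=
      toMeasurable (volume : Measure (EuclideanSpace ℝ (Fin d))) {x | f x ≠ g x} with hN
    have hNm : MeasurableSet N := measurableSet_toMeasurable _ _
    have hN0 : (volume : Measure (EuclideanSpace ℝ (Fin d))) N = 0 := by
      rw [hN, measure_toMeasurable]; exact ae_iff.mp hfg
    have hsub : {x | f x ≠ g x} ⊆ N := subset_toMeasurable _ _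
    have h1 : (fun p : (EuclideanSpace ℝ (Fin d)) × (EuclideanSpace ℝ (Fin d)) => f p.1)
        =ᵐ[(volume : Measure (EuclideanSpace ℝ (Fin d))).prod ν] fun p => g p.1 := by
      apply ae_iff.mpr
      apply measure_mono_null (t := N ×ˢ (Set.univ : Set (EuclideanSpace ℝ (Fin d))))
      · intro p hp
        exact ⟨hsub hp, Set.mem_univ _⟩
      · rw [Measure.prod_prod, hN0, zero_mul]
    have h2 : (fun p : (EuclideanSpace ℝ (Fin d)) × (EuclideanSpace ℝ (Fin d)) =>
        f (p.1 + p.2)) =ᵐ[(volume : Measure (EuclideanSpace ℝ (Fin d))).prod ν]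
        fun p => g (p.1 + p.2) := by
      apply ae_iff.mpr
      apply measure_mono_null
        (t := (fun p : (EuclideanSpace ℝ (Fin d)) × (EuclideanSpace ℝ (Fin d)) =>
          p.1 + p.2) ⁻¹' N)
      · intro p hp; exact hsub hp
      · have hm : MeasurableSet ((fun p : (EuclideanSpace ℝ (Fin d)) ×
            (EuclideanSpace ℝ (Fin d)) => p.1 + p.2) ⁻¹' N) :=
          (measurable_fst.add measurable_snd) hNm
        rw [Measure.prod_apply_symm hm]
        have hsec : ∀ z : EuclideanSpace ℝ (Fin d),
            (volume : Measure (EuclideanSpace ℝ (Fin d)))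
              ((fun x : EuclideanSpace ℝ (Fin d) => (x, z)) ⁻¹'
                ((fun p : (EuclideanSpace ℝ (Fin d)) × (EuclideanSpace ℝ (Fin d)) =>
                  p.1 + p.2) ⁻¹' N)) = 0 := by
          intro z
          have hid : ((fun x : EuclideanSpace ℝ (Fin d) => (x, z)) ⁻¹'
              ((fun p : (EuclideanSpace ℝ (Fin d)) × (EuclideanSpace ℝ (Fin d)) =>
                p.1 + p.2) ⁻¹' N))
              = (fun x : EuclideanSpace ℝ (Fin d) => x + z) ⁻¹' N := rfl
          rw [hid, measure_preimage_add_right, hN0]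
        simp [hsec]
    have hFmeas : AEMeasurable (fun p : (EuclideanSpace ℝ (Fin d)) ×
        (EuclideanSpace ℝ (Fin d)) => ENNReal.ofReal ((f (p.1 + p.2) - f p.1) ^ 2))
        ((volume : Measure (EuclideanSpace ℝ (Fin d))).prod ν) := by
      have hG : Measurable (fun p : (EuclideanSpace ℝ (Fin d)) ×
          (EuclideanSpace ℝ (Fin d)) => ENNReal.ofReal ((g (p.1 + p.2) - g p.1) ^ 2)) := by
        apply Measurable.ennreal_ofReal
        exact ((hgm.comp (measurable_fst.add measurable_snd)).sub
          (hgm.comp measurable_fst)).pow_const 2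
      refine hG.aemeasurable.congr ?_
      filter_upwards [h1, h2] with p hp1 hp2
      rw [hp1, hp2]
    have hprod0 : ∫⁻ p, ENNReal.ofReal ((f (p.1 + p.2) - f p.1) ^ 2)
        ∂((volume : Measure (EuclideanSpace ℝ (Fin d))).prod ν) = 0 := by
      rw [lintegral_prod _ hFmeas]; exact hzero
    have hF0 : (fun p : (EuclideanSpace ℝ (Fin d)) × (EuclideanSpace ℝ (Fin d)) =>
        ENNReal.ofReal ((f (p.1 + p.2) - f p.1) ^ 2))
        =ᵐ[(volume : Measure (EuclideanSpace ℝ (Fin d))).prod ν] 0 :=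
      (lintegral_eq_zero_iff' hFmeas).mp hprod0
    have heq : ∀ᵐ p ∂((volume : Measure (EuclideanSpace ℝ (Fin d))).prod ν),
        f (p.1 + p.2) = f p.1 := by
      filter_upwards [hF0] with p hp
      have h0 := ENNReal.ofReal_eq_zero.mp hp
      have h2 : (f (p.1 + p.2) - f p.1) ^ 2 = 0 := le_antisymm h0 (sq_nonneg _)
      have h3 := pow_eq_zero_iff (n := 2) (by norm_num) |>.mp h2
      linarith [sub_eq_zero.mp h3]
    have hswap : ∀ᵐ q ∂(ν.prod (volume : Measure (EuclideanSpace ℝ (Fin d)))),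
        f (q.2 + q.1) = f q.2 := by
      set B := toMeasurable ((volume : Measure (EuclideanSpace ℝ (Fin d))).prod ν)
        {p : (EuclideanSpace ℝ (Fin d)) × (EuclideanSpace ℝ (Fin d)) |
          ¬ f (p.1 + p.2) = f p.1} with hB
      have hBm : MeasurableSet B := measurableSet_toMeasurable _ _
      have hB0 : ((volume : Measure (EuclideanSpace ℝ (Fin d))).prod ν) B = 0 := by
        rw [hB, measure_toMeasurable]; exact ae_iff.mp heq
      have hpre : (ν.prod (volume : Measure (EuclideanSpace ℝ (Fin d))))
          (Prod.swap ⁻¹' B) = 0 := by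
        rw [← Measure.map_apply measurable_swap hBm, Measure.prod_swap]; exact hB0
      apply ae_iff.mpr
      apply measure_mono_null (t := Prod.swap ⁻¹' B) _ hpre
      intro q hq
      exact subset_toMeasurable _ _ hq
    exact Measure.ae_ae_of_ae_prod hswap
  have hνP : ν {z : EuclideanSpace ℝ (Fin d) |
      ¬ ∀ᵐ x ∂(volume : Measure (EuclideanSpace ℝ (Fin d))), f (x + z) = f x} = 0 :=
    ae_iff.mp hae
  -- closure of the invariance property under addition
  have hPadd : ∀ w z : EuclideanSpace ℝ (Fin d),
      (∀ᵐ x ∂(volume : Measure (EuclideanSpace ℝ (Fin d))), f (x + w) = f x) →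
      (∀ᵐ x ∂(volume : Measure (EuclideanSpace ℝ (Fin d))), f (x + z) = f x) →
      ∀ᵐ x ∂(volume : Measure (EuclideanSpace ℝ (Fin d))), f (x + (w + z)) = f x := by
    intro w z hw hz
    have h1 : ∀ᵐ x ∂(volume : Measure (EuclideanSpace ℝ (Fin d))),
        f ((x + z) + w) = f (x + z) := htrans z _ hw
    filter_upwards [h1, hz] with x e1 e2
    calc f (x + (w + z)) = f ((x + z) + w) := by rw [add_comm w z, ← add_assoc]
      _ = f (x + z) := e1
      _ = f x := e2
  -- find a translation vector with the invariance property and norm ≥ R₀/4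
  set e : EuclideanSpace ℝ (Fin d) := EuclideanSpace.single ⟨0, hd0⟩ (R₀ / 2) with he
  have hee : ‖e‖ = R₀ / 2 := by
    rw [he, EuclideanSpace.norm_single]
    exact abs_of_pos (by positivity)
  have hball := hsupp e (by rw [hee]; linarith) (R₀/4) (by positivity)
  have hz₀ : ∃ z₀ ∈ ball e (R₀/4),
      ∀ᵐ x ∂(volume : Measure (EuclideanSpace ℝ (Fin d))), f (x + z₀) = f x := by
    by_contra h
    push_neg at h
    have hsub : ball e (R₀/4) ⊆ {z : EuclideanSpace ℝ (Fin d) |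
        ¬ ∀ᵐ x ∂(volume : Measure (EuclideanSpace ℝ (Fin d))), f (x + z) = f x} :=
      fun z hzz => Filter.not_eventually.mpr (h z hzz)
    exact hball.ne' (measure_mono_null hsub hνP)
  obtain ⟨z₀, hz₀mem, hz₀P⟩ := hz₀
  have hz₀n : R₀/4 ≤ ‖z₀‖ := by
    have h1 : dist z₀ e < R₀/4 := mem_ball.mp hz₀mem
    have h2 : |‖z₀‖ - ‖e‖| ≤ ‖z₀ - e‖ := abs_norm_sub_norm_le z₀ e
    rw [dist_eq_norm] at h1
    have h3 := neg_abs_le (‖z₀‖ - ‖e‖)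
    rw [hee] at h2 h3
    linarith
  -- iterated translations
  have hPn : ∀ n : ℕ, ∀ᵐ x ∂(volume : Measure (EuclideanSpace ℝ (Fin d))),
      f (x + (n+1) • z₀) = f x := by
    intro n
    induction n with
    | zero => simpa using hz₀P
    | succ n ih =>
      have := hPadd _ _ ih hz₀P
      have hsm : ((n+1) • z₀ + z₀ : EuclideanSpace ℝ (Fin d)) = (n+1+1) • z₀ := by
        simp [succ_nsmul]
      rw [hsm] at this
      exact this
  -- the bounded support
  obtain ⟨s, hsb, hs0⟩ := hbd
  obtain ⟨r, hr⟩ := hsb.subset_closedBall 0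
  set M : ℝ := max r 0 with hMdefM
  have hM : s ⊆ closedBall (0 : EuclideanSpace ℝ (Fin d)) M :=
    hr.trans (closedBall_subset_closedBall (le_max_left _ _))
  have hM0 : 0 ≤ M := le_max_right _ _
  obtain ⟨n, hn⟩ := exists_nat_gt ((2*M+1)/(R₀/4))
  have hbig : (2*M : ℝ) < ((n+1 : ℕ) : ℝ) * ‖z₀‖ := by
    have h4 : (0:ℝ) < R₀/4 := by positivity
    have h5 : (2*M+1 : ℝ) < (n : ℝ) * (R₀/4) := by
      rw [div_lt_iff₀ h4] at hn
      linarith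
    have h6 : ((n:ℝ)) * (R₀/4) ≤ ((n+1 : ℕ) : ℝ) * ‖z₀‖ :=
      mul_le_mul (by push_cast; linarith) hz₀n (by positivity) (by positivity)
    linarith
  have hznorm : (2*M : ℝ) < ‖((n+1) • z₀ : EuclideanSpace ℝ (Fin d))‖ := by
    have : ‖((n+1) • z₀ : EuclideanSpace ℝ (Fin d))‖ = ((n+1 : ℕ) : ℝ) * ‖z₀‖ := by
      rw [← Nat.cast_smul_eq_nsmul ℝ, norm_smul, Real.norm_eq_abs, Nat.abs_cast]
    rw [this]
    exact hbig
  -- conclude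
  filter_upwards [hPn n, hs0, htrans ((n+1) • z₀) _ hs0] with x h1 h2 h3
  show f x = 0
  by_cases hx : x ∈ s
  · have hxM : ‖x‖ ≤ M := by
      have := hM hx
      rwa [mem_closedBall, dist_zero_right] at this
    have hnot : x + (n+1) • z₀ ∉ s := by
      intro hmem
      have hxzM : ‖x + (n+1) • z₀‖ ≤ M := by
        have := hM hmem
        rwa [mem_closedBall, dist_zero_right] at this
      have htri : ‖((n+1) • z₀ : EuclideanSpace ℝ (Fin d))‖ ≤ ‖x + (n+1) • z₀‖ + ‖x‖ := by
        have h9 : ‖(x + (n+1) • z₀) - x‖ ≤ ‖x + (n+1) • z₀‖ + ‖x‖ := norm_sub_le _ _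
        have h10 : (x + (n+1) • z₀) - x = ((n+1) • z₀ : EuclideanSpace ℝ (Fin d)) := by abel
        rwa [h10] at h9
      linarith
    rw [← h1]
    exact h3 hnot
  · exact h2 hx
end

section
/- Let d ≥ 1, α ∈ (0, 2), and let ν be the measure on ℝ^d with density z ↦ |z|^{−d−α} · 1_{⋃_{i≥0} {2^{−2i−1} ≤ |z| ≤ 2^{−2i}}}(z) with respect to Lebesgue measure, with characteristic exponent q(ξ) = ∫ (1 − cos⟨ξ, z⟩) ν(dz) and Φ₁(r) := sup_{|ξ| ≤ r} q(ξ). Then there exists a constant c ≥ 1 such that c^{−1} r^{α} ≤ Φ₁(r) ≤ c r^{α} for all r ≥ 1. -/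
open MeasureTheory Metric
open scoped ENNReal

/-- The Lévy measure with density `|z|^{-d-α}` on the union of annuli
`{2^{-2i-1} ≤ |z| ≤ 2^{-2i}}`, `i ≥ 0`, with respect to Lebesgue measure. -/
noncomputable def lacunaryStableMeasure (d : ℕ) (α : ℝ) :
    Measure (EuclideanSpace ℝ (Fin d)) :=
  MeasureTheory.volume.withDensity fun z =>
    Set.indicator
      {z : EuclideanSpace ℝ (Fin d) |
        ∃ i : ℕ, (2 : ℝ) ^ (-(2 * (i : ℝ) + 1)) ≤ ‖z‖ ∧ ‖z‖ ≤ (2 : ℝ) ^ (-(2 * (i : ℝ)))}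
      (fun z => ENNReal.ofReal (‖z‖ ^ (-((d : ℝ) + α)))) z

open Set
open scoped Pointwise

namespace LacAux

noncomputable def tt (i : ℕ) : ℝ := (2 : ℝ) ^ (-(2 * (i : ℝ)))

lemma tt_pos (i : ℕ) : 0 < tt i := Real.rpow_pos_of_pos two_pos _

lemma tt_le_one (i : ℕ) : tt i ≤ 1 :=
  Real.rpow_le_one_of_one_le_of_nonpos one_le_two (neg_nonpos.mpr (by positivity))

lemma lo_eq (i : ℕ) : (2:ℝ) ^ (-(2*(i:ℝ)+1)) = tt i / 2 := by
  rw [tt, show -(2*(i:ℝ)+1) = -(2*(i:ℝ)) + (-1) by ring, Real.rpow_add two_pos,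
    Real.rpow_neg_one]
  ring

lemma tt_rpow_neg (α : ℝ) (i : ℕ) : tt i ^ (-α) = ((2:ℝ) ^ (2*α)) ^ i := by
  rw [tt, ← Real.rpow_natCast ((2:ℝ) ^ (2*α)) i, ← Real.rpow_mul (by norm_num),
    ← Real.rpow_mul (by norm_num)]
  congr 1
  ring

lemma tt_sq (i : ℕ) : tt i ^ 2 = (16⁻¹ : ℝ) ^ i := by
  have h16 : (16⁻¹ : ℝ) = (2:ℝ) ^ (-(4:ℝ)) := by
    rw [Real.rpow_neg (by norm_num), show (4:ℝ) = ((4:ℕ):ℝ) by norm_num,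
      Real.rpow_natCast]
    norm_num
  rw [tt, h16, ← Real.rpow_natCast ((2:ℝ) ^ (-(4:ℝ))) i, ← Real.rpow_mul (by norm_num),
    ← Real.rpow_natCast ((2:ℝ) ^ (-(2 * (i:ℝ)))) 2, ← Real.rpow_mul (by norm_num)]
  congr 1
  push_cast
  ring

variable {d : ℕ} {α : ℝ}

def Aset (d : ℕ) (i : ℕ) : Set (EuclideanSpace ℝ (Fin d)) :=
  {z | tt i / 2 ≤ ‖z‖ ∧ ‖z‖ ≤ tt i}

def Uset (d : ℕ) : Set (EuclideanSpace ℝ (Fin d)) := ⋃ i, Aset d i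

lemma Uset_eq (d : ℕ) :
    {z : EuclideanSpace ℝ (Fin d) |
        ∃ i : ℕ, (2 : ℝ) ^ (-(2 * (i : ℝ) + 1)) ≤ ‖z‖ ∧ ‖z‖ ≤ (2 : ℝ) ^ (-(2 * (i : ℝ)))}
      = Uset d := by
  ext z
  simp only [Uset, Aset, mem_iUnion, mem_setOf_eq, lo_eq, tt]

noncomputable def dens (d : ℕ) (α : ℝ) (z : EuclideanSpace ℝ (Fin d)) : ℝ≥0∞ :=
  ENNReal.ofReal (‖z‖ ^ (-((d : ℝ) + α)))

noncomputable def fden (d : ℕ) (α : ℝ) : EuclideanSpace ℝ (Fin d) → ℝ≥0∞ :=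
  (Uset d).indicator (dens d α)

lemma lac_eq : lacunaryStableMeasure d α = volume.withDensity (fden d α) := by
  unfold lacunaryStableMeasure fden dens
  rw [Uset_eq]

lemma meas_Aset (i : ℕ) : MeasurableSet (Aset d i) := by
  have h : Aset d i = {z : EuclideanSpace ℝ (Fin d) | tt i / 2 ≤ ‖z‖} ∩ {z | ‖z‖ ≤ tt i} := rfl
  rw [h]
  exact (isClosed_le continuous_const continuous_norm).measurableSet.inter
    (isClosed_le continuous_norm continuous_const).measurableSet

lemma meas_Uset : MeasurableSet (Uset d) := MeasurableSet.iUnion fun i => meas_Aset i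

lemma meas_dens : Measurable (dens d α) := by
  unfold dens
  measurability

lemma meas_fden : Measurable (fden d α) := meas_dens.indicator meas_Uset

noncomputable def gfun (ξ z : EuclideanSpace ℝ (Fin d)) : ℝ≥0∞ :=
  ENNReal.ofReal (1 - Real.cos (inner ℝ ξ z))

lemma cont_inner (ξ : EuclideanSpace ℝ (Fin d)) :
    Continuous (fun z : EuclideanSpace ℝ (Fin d) => (inner ℝ ξ z : ℝ)) :=
  continuous_const.inner continuous_id

lemma meas_gfun (ξ : EuclideanSpace ℝ (Fin d)) : Measurable (gfun ξ) := by
  apply ENNReal.measurable_ofReal.comp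
  exact ((continuous_const.sub (Real.continuous_cos.comp (cont_inner ξ))).measurable)

lemma one_sub_cos_nonneg (t : ℝ) : 0 ≤ 1 - Real.cos t := by
  have := Real.cos_le_one t; linarith

lemma one_sub_cos_le_two (t : ℝ) : 1 - Real.cos t ≤ 2 := by
  have := Real.neg_one_le_cos t; linarith

lemma one_sub_cos_le_sq (t : ℝ) : 1 - Real.cos t ≤ t^2 := by
  have := Real.one_sub_sq_div_two_le_cos (x := t); nlinarith

-- bound of the integrand on the annulus
lemma annulus_bound (hα : 0 < α) {r : ℝ} (hr : 1 ≤ r)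
    {ξ : EuclideanSpace ℝ (Fin d)} (hξ : ‖ξ‖ ≤ r) (i : ℕ) :
    ∫⁻ z, (Aset d i).indicator (fun z => dens d α z * gfun ξ z) z ∂volume
      ≤ ENNReal.ofReal ((2:ℝ)^((d:ℝ)+α)
          * (((2:ℝ)^(2*α))^i * min 2 (r^2 * (16⁻¹:ℝ)^i)))
        * volume (ball (0 : EuclideanSpace ℝ (Fin d)) 1) := by
  have hr0 : (0:ℝ) < r := lt_of_lt_of_le one_pos hr
  set M : ℝ := (tt i/2) ^ (-((d:ℝ)+α)) * min 2 (r^2 * (16⁻¹:ℝ)^i) with hM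
  have htt : (0:ℝ) < tt i / 2 := div_pos (tt_pos i) two_pos
  have hMnn : 0 ≤ M := by
    have h1 : (0:ℝ) ≤ (tt i/2) ^ (-((d:ℝ)+α)) := Real.rpow_nonneg htt.le _
    have h2 : (0:ℝ) ≤ min 2 (r^2 * (16⁻¹:ℝ)^i) := le_min (by norm_num) (by positivity)
    exact mul_nonneg h1 h2
  have hpt : ∀ z, (Aset d i).indicator (fun z => dens d α z * gfun ξ z) z
      ≤ (Aset d i).indicator (fun _ => ENNReal.ofReal M) z := by
    intro z
    by_cases hz : z ∈ Aset d i
    · rw [Set.indicator_of_mem hz, Set.indicator_of_mem hz]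
      obtain ⟨hz1, hz2⟩ := hz
      have hz0 : (0:ℝ) < ‖z‖ := lt_of_lt_of_le htt hz1
      have hd : dens d α z ≤ ENNReal.ofReal ((tt i/2) ^ (-((d:ℝ)+α))) := by
        apply ENNReal.ofReal_le_ofReal
        exact Real.rpow_le_rpow_of_nonpos htt hz1 (neg_nonpos.mpr (add_nonneg (Nat.cast_nonneg d) hα.le))
      have hg : gfun ξ z ≤ ENNReal.ofReal (min 2 (r^2 * (16⁻¹:ℝ)^i)) := by
        apply ENNReal.ofReal_le_ofReal
        apply le_min (one_sub_cos_le_two _)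
        have h1 : (1:ℝ) - Real.cos (inner ℝ ξ z) ≤ (inner ℝ ξ z : ℝ)^2 := one_sub_cos_le_sq _
        have h2 : |(inner ℝ ξ z : ℝ)| ≤ r * tt i := by
          calc |(inner ℝ ξ z : ℝ)| ≤ ‖ξ‖ * ‖z‖ := abs_real_inner_le_norm ξ z
            _ ≤ r * tt i := by
                apply mul_le_mul hξ hz2 (norm_nonneg z) hr0.le
        have h3 : (inner ℝ ξ z : ℝ)^2 ≤ (r * tt i)^2 := by
          rw [← sq_abs]
          exact pow_le_pow_left₀ (abs_nonneg _) h2 2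
        have h4 : (r * tt i)^2 = r^2 * (16⁻¹:ℝ)^i := by
          rw [mul_pow, tt_sq]
        linarith
      calc dens d α z * gfun ξ z
          ≤ ENNReal.ofReal ((tt i/2) ^ (-((d:ℝ)+α)))
            * ENNReal.ofReal (min 2 (r^2 * (16⁻¹:ℝ)^i)) := mul_le_mul' hd hg
        _ = ENNReal.ofReal M := by
            rw [← ENNReal.ofReal_mul (Real.rpow_nonneg htt.le _)]
    · rw [Set.indicator_of_notMem hz, Set.indicator_of_notMem hz]
  calc ∫⁻ z, (Aset d i).indicator (fun z => dens d α z * gfun ξ z) z ∂volume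
      ≤ ∫⁻ z, (Aset d i).indicator (fun _ => ENNReal.ofReal M) z ∂volume := lintegral_mono hpt
    _ = ENNReal.ofReal M * volume (Aset d i) := lintegral_indicator_const (meas_Aset i) _
    _ ≤ ENNReal.ofReal M * volume (closedBall (0 : EuclideanSpace ℝ (Fin d)) (tt i)) := by
        apply mul_le_mul_right
        apply measure_mono
        intro z hz
        exact mem_closedBall_zero_iff.mpr hz.2
    _ = ENNReal.ofReal M * (ENNReal.ofReal (tt i ^ d)
          * volume (ball (0 : EuclideanSpace ℝ (Fin d)) 1)) := by
        rw [Measure.addHaar_closedBall _ _ (tt_pos i).le, finrank_euclideanSpace_fin]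
    _ = (ENNReal.ofReal M * ENNReal.ofReal (tt i ^ d))
          * volume (ball (0 : EuclideanSpace ℝ (Fin d)) 1) := by rw [mul_assoc]
    _ ≤ ENNReal.ofReal ((2:ℝ)^((d:ℝ)+α) * (((2:ℝ)^(2*α))^i * min 2 (r^2 * (16⁻¹:ℝ)^i)))
          * volume (ball (0 : EuclideanSpace ℝ (Fin d)) 1) := by
        apply mul_le_mul_left
        rw [← ENNReal.ofReal_mul hMnn]
        apply ENNReal.ofReal_le_ofReal
        have hT := tt_pos i
        have hmix : tt i ^ (-((d:ℝ)+α)) * tt i ^ ((d:ℕ):ℝ) = tt i ^ (-α) := by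
          rw [← Real.rpow_add hT]
          congr 1
          push_cast
          ring
        have h1 : (tt i/2) ^ (-((d:ℝ)+α)) * tt i ^ d
            = (2:ℝ)^((d:ℝ)+α) * ((2:ℝ)^(2*α))^i := by
          calc (tt i/2) ^ (-((d:ℝ)+α)) * tt i ^ d
              = (tt i ^ (-((d:ℝ)+α)) / (2:ℝ) ^ (-((d:ℝ)+α))) * tt i ^ ((d:ℕ):ℝ) := by
                rw [Real.div_rpow hT.le (by norm_num), Real.rpow_natCast]
            _ = (tt i ^ (-((d:ℝ)+α)) * tt i ^ ((d:ℕ):ℝ)) * (2:ℝ) ^ ((d:ℝ)+α) := by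
                rw [Real.rpow_neg (by norm_num : (0:ℝ) ≤ 2), div_inv_eq_mul]
                ring
            _ = (2:ℝ)^((d:ℝ)+α) * ((2:ℝ)^(2*α))^i := by
                rw [hmix, tt_rpow_neg]
                ring
        have key : M * tt i ^ d
            = (2:ℝ)^((d:ℝ)+α) * (((2:ℝ)^(2*α))^i * min 2 (r^2 * (16⁻¹:ℝ)^i)) := by
          rw [hM]
          calc (tt i/2) ^ (-((d:ℝ)+α)) * min 2 (r^2 * (16⁻¹:ℝ)^i) * tt i ^ d
              = ((tt i/2) ^ (-((d:ℝ)+α)) * tt i ^ d) * min 2 (r^2 * (16⁻¹:ℝ)^i) := by ring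
            _ = (2:ℝ)^((d:ℝ)+α) * (((2:ℝ)^(2*α))^i * min 2 (r^2 * (16⁻¹:ℝ)^i)) := by
                rw [h1]; ring
        rw [key]


lemma pow_bridgeB (α : ℝ) (N : ℕ) : ((2:ℝ)^(2*α))^N = ((4:ℝ)^N)^α := by
  rw [show (4:ℝ) = 2^2 by norm_num, ← pow_mul, ← Real.rpow_natCast ((2:ℝ)^(2*α)) N,
    ← Real.rpow_mul (by norm_num), ← Real.rpow_natCast (2:ℝ) (2*N),
    ← Real.rpow_mul (by norm_num)]
  congr 1
  push_cast
  ring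

noncomputable def Csum (α : ℝ) : ℝ :=
  2 * (2:ℝ)^(2*α) / ((2:ℝ)^(2*α) - 1) + (2:ℝ)^(2*α) * (16 / (16 - (2:ℝ)^(2*α)))

lemma x_gt_one' {α : ℝ} (hα : 0 < α) : 1 < (2:ℝ)^(2*α) := by
  have := Real.rpow_lt_rpow_of_exponent_lt one_lt_two (show (0:ℝ) < 2*α by positivity)
  rwa [Real.rpow_zero] at this

lemma x_lt_16' {α : ℝ} (hα2 : α < 2) : (2:ℝ)^(2*α) < 16 := by
  have : (2:ℝ)^(2*α) < (2:ℝ)^((4:ℕ):ℝ) :=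
    Real.rpow_lt_rpow_of_exponent_lt one_lt_two (by push_cast; linarith)
  rw [Real.rpow_natCast] at this
  norm_num at this
  exact this

lemma summable_aseq' {α : ℝ} (r : ℝ) (hα2 : α < 2) :
    Summable (fun i : ℕ => ((2:ℝ)^(2*α))^i * min 2 (r^2 * (16⁻¹:ℝ)^i)) := by
  have hx0 : (0:ℝ) < (2:ℝ)^(2*α) := by positivity
  have hx16 : (2:ℝ)^(2*α) < 16 := x_lt_16' hα2
  refine Summable.of_nonneg_of_le (f := fun i => r^2 * (((2:ℝ)^(2*α))/16)^i) ?_ ?_ ?_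
  · intro i
    have h : (0:ℝ) ≤ min 2 (r^2 * (16⁻¹:ℝ)^i) := le_min (by norm_num) (by positivity)
    positivity
  · intro i
    calc ((2:ℝ)^(2*α))^i * min 2 (r^2 * (16⁻¹:ℝ)^i)
        ≤ ((2:ℝ)^(2*α))^i * (r^2 * (16⁻¹:ℝ)^i) :=
          mul_le_mul_of_nonneg_left (min_le_right _ _) (by positivity)
      _ = r^2 * (((2:ℝ)^(2*α))/16)^i := by rw [div_pow, inv_pow, div_eq_mul_inv]; ring
  · exact ((summable_geometric_of_lt_one (by positivity)
      (by rw [div_lt_one (by norm_num)]; exact hx16)).mul_left _)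

lemma Csum_pos' {α : ℝ} (hα : 0 < α) (hα2 : α < 2) : 0 < Csum α := by
  have hx1 : 1 < (2:ℝ)^(2*α) := x_gt_one' hα
  have hx16 : (2:ℝ)^(2*α) < 16 := x_lt_16' hα2
  have h1 : 0 < 2 * (2:ℝ)^(2*α) / ((2:ℝ)^(2*α) - 1) := by
    apply div_pos (by linarith) (by linarith)
  have h2 : 0 < (2:ℝ)^(2*α) * (16 / (16 - (2:ℝ)^(2*α))) := by
    apply mul_pos (by linarith) (div_pos (by norm_num) (by linarith))
  unfold Csum; linarith

lemma sum_est' {α r : ℝ} (hα : 0 < α) (hα2 : α < 2) (hr : 1 ≤ r) :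
    (∑' i : ℕ, ((2:ℝ)^(2*α))^i * min 2 (r^2 * (16⁻¹:ℝ)^i)) ≤ Csum α * r ^ α := by
  set x := (2:ℝ)^(2*α) with hx
  have hx1 : 1 < x := x_gt_one' hα
  have hx0 : (0:ℝ) < x := by linarith
  have hx16 : x < 16 := x_lt_16' hα2
  have hy0 : (0:ℝ) ≤ x/16 := by positivity
  have hy1 : x/16 < 1 := by rw [div_lt_one (by norm_num)]; exact hx16
  have hr0 : (0:ℝ) < r := lt_of_lt_of_le one_pos hr
  have hrα : (0:ℝ) < r ^ α := Real.rpow_pos_of_pos hr0 _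
  set N := ⌊Real.logb 4 r⌋₊ with hN
  have h4N : (4:ℝ)^N ≤ r := by
    have hlb : (N:ℝ) ≤ Real.logb 4 r := Nat.floor_le (Real.logb_nonneg (by norm_num) hr)
    calc (4:ℝ)^N = (4:ℝ)^((N:ℕ):ℝ) := (Real.rpow_natCast _ _).symm
      _ ≤ (4:ℝ)^(Real.logb 4 r) := Real.rpow_le_rpow_of_exponent_le (by norm_num) hlb
      _ = r := Real.rpow_logb (by norm_num) (by norm_num) hr0
  have hr4 : r < (4:ℝ)^(N+1) := by
    have hub : Real.logb 4 r < (N:ℝ) + 1 := Nat.lt_floor_add_one _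
    calc r = (4:ℝ)^(Real.logb 4 r) := (Real.rpow_logb (by norm_num) (by norm_num) hr0).symm
      _ < (4:ℝ)^(((N:ℕ):ℝ)+1) := Real.rpow_lt_rpow_of_exponent_lt (by norm_num) hub
      _ = (4:ℝ)^(N+1) := by
          rw [show ((N:ℕ):ℝ)+1 = ((N+1:ℕ):ℝ) by push_cast; ring, Real.rpow_natCast]
  have hxNr : x^N ≤ r^α := by
    rw [hx, pow_bridgeB]
    exact Real.rpow_le_rpow (by positivity) h4N hα.le
  set c : ℕ → ℝ := fun i => if i ≤ N then 2*x^i else 0 with hc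
  set e : ℕ → ℝ := fun i => if N < i then r^2 * (x/16)^i else 0 with he
  have hce : ∀ i, x^i * min 2 (r^2 * (16⁻¹:ℝ)^i) ≤ c i + e i := by
    intro i
    by_cases hi : i ≤ N
    · have h1 : x^i * min 2 (r^2 * (16⁻¹:ℝ)^i) ≤ x^i * 2 :=
        mul_le_mul_of_nonneg_left (min_le_left _ _) (by positivity)
      have h2 : (0:ℝ) ≤ e i := by
        simp only [he]; split <;> positivity
      simp only [hc, if_pos hi]
      linarith
    · push_neg at hi
      have h1 : x^i * min 2 (r^2 * (16⁻¹:ℝ)^i) ≤ x^i * (r^2 * (16⁻¹:ℝ)^i) :=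
        mul_le_mul_of_nonneg_left (min_le_right _ _) (by positivity)
      have h2 : x^i * (r^2 * (16⁻¹:ℝ)^i) = r^2 * (x/16)^i := by
        rw [div_pow, inv_pow, div_eq_mul_inv]; ring
      simp only [hc, he, if_neg (not_le.mpr hi), if_pos hi]
      linarith
  have hsc : Summable c := by
    apply summable_of_ne_finset_zero (s := Finset.range (N+1))
    intro i hi
    have hi' : ¬ i ≤ N := by simp only [Finset.mem_range] at hi; omega
    simp [hc, hi']
  have hge : Summable (fun i : ℕ => r^2 * (x/16)^i) :=
    (summable_geometric_of_lt_one hy0 hy1).mul_left _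
  have hse : Summable e := by
    refine Summable.of_nonneg_of_le ?_ ?_ hge
    · intro i; simp only [he]; split <;> positivity
    · intro i; simp only [he]; split
      · exact le_rfl
      · positivity
  have hsum := summable_aseq' (α := α) r hα2
  have key : (∑' i : ℕ, x^i * min 2 (r^2 * (16⁻¹:ℝ)^i)) ≤ (∑' i, c i) + (∑' i, e i) := by
    calc (∑' i : ℕ, x^i * min 2 (r^2 * (16⁻¹:ℝ)^i)) ≤ ∑' i, (c i + e i) :=
        hsum.tsum_le_tsum hce (hsc.add hse)
      _ = (∑' i, c i) + (∑' i, e i) := hsc.tsum_add hse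
  have hcval : (∑' i, c i) ≤ 2*x/(x-1) * r^α := by
    have h1 : (∑' i, c i) = ∑ i ∈ Finset.range (N+1), c i := by
      apply tsum_eq_sum
      intro i hi
      have hi' : ¬ i ≤ N := by simp only [Finset.mem_range] at hi; omega
      simp [hc, hi']
    have h2 : ∑ i ∈ Finset.range (N+1), c i = 2 * ∑ i ∈ Finset.range (N+1), x^i := by
      rw [Finset.mul_sum]
      refine Finset.sum_congr rfl fun i hi => ?_
      have hi' : i ≤ N := by simp only [Finset.mem_range] at hi; omega
      simp [hc, hi']
    have h3 : ∑ i ∈ Finset.range (N+1), x^i = (x^(N+1) - 1)/(x-1) :=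
      geom_sum_eq (ne_of_gt hx1) _
    have h4 : x^(N+1) - 1 ≤ x * r^α := by
      have hxx : x^(N+1) = x * x^N := by ring
      nlinarith [mul_le_mul_of_nonneg_left hxNr hx0.le]
    have h5 : (x^(N+1)-1)/(x-1) ≤ (x * r^α)/(x-1) :=
      div_le_div_of_nonneg_right h4 (by linarith)
    rw [h1, h2, h3]
    calc 2 * ((x^(N+1)-1)/(x-1)) ≤ 2 * ((x * r^α)/(x-1)) := by linarith
      _ = 2*x/(x-1) * r^α := by field_simp
  have heval : (∑' i, e i) ≤ x * (16/(16-x)) * r^α := by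
    have htail : ∀ i : ℕ, e (i + (N+1)) = (r^2 * (x/16)^(N+1)) * (x/16)^i := by
      intro i
      have : N < i + (N+1) := by omega
      simp only [he, if_pos this, pow_add]
      ring
    have h0 : ∑ i ∈ Finset.range (N+1), e i = 0 := by
      apply Finset.sum_eq_zero
      intro i hi
      have hi' : ¬ N < i := by simp only [Finset.mem_range] at hi; omega
      simp [he, hi']
    have h1 : (∑' i, e i) = (r^2 * (x/16)^(N+1)) * (1 - x/16)⁻¹ := by
      rw [← hse.sum_add_tsum_nat_add (N+1), h0, zero_add]
      rw [tsum_congr htail, tsum_mul_left, tsum_geometric_of_lt_one hy0 hy1]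
    have h2 : r^2 * (x/16)^(N+1) ≤ x * r^α := by
      have hr2 : r^2 ≤ ((4:ℝ)^(N+1))^2 := by nlinarith
      have h16 : ((4:ℝ)^(N+1))^2 = (16:ℝ)^(N+1) := by
        rw [← pow_mul, show (16:ℝ) = 4^2 by norm_num, ← pow_mul]
        ring_nf
      have h3 : r^2 * (x/16)^(N+1) ≤ (16:ℝ)^(N+1) * (x/16)^(N+1) := by
        apply mul_le_mul_of_nonneg_right _ (by positivity)
        rw [← h16]; exact hr2
      have h4 : (16:ℝ)^(N+1) * (x/16)^(N+1) = x^(N+1) := by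
        rw [← mul_pow]
        congr 1
        field_simp
      have h5 : x^(N+1) = x * x^N := by ring
      have h6 : x * x^N ≤ x * r^α := mul_le_mul_of_nonneg_left hxNr hx0.le
      linarith
    have h7 : (1 - x/16)⁻¹ = 16/(16-x) := by
      rw [show 1 - x/16 = (16-x)/16 by ring, inv_div]
    rw [h1, h7]
    have h8 : (0:ℝ) < 16/(16-x) := div_pos (by norm_num) (by linarith)
    calc r^2 * (x/16)^(N+1) * (16/(16-x)) ≤ (x * r^α) * (16/(16-x)) :=
        mul_le_mul_of_nonneg_right h2 h8.le
      _ = x * (16/(16-x)) * r^α := by ring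
  calc (∑' i : ℕ, x^i * min 2 (r^2 * (16⁻¹:ℝ)^i)) ≤ (∑' i, c i) + (∑' i, e i) := key
    _ ≤ 2*x/(x-1) * r^α + x * (16/(16-x)) * r^α := by linarith
    _ = Csum α * r ^ α := by rw [Csum]; ring

noncomputable def Cup (d : ℕ) (α : ℝ) : ℝ :=
  (volume (ball (0 : EuclideanSpace ℝ (Fin d)) 1)).toReal * ((2:ℝ)^((d:ℝ)+α) * Csum α)

lemma lint_upper (hα : 0 < α) (hα2 : α < 2) {r : ℝ} (hr : 1 ≤ r)
    {ξ : EuclideanSpace ℝ (Fin d)} (hξ : ‖ξ‖ ≤ r) :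
    ∫⁻ z, gfun ξ z ∂(lacunaryStableMeasure d α) ≤ ENNReal.ofReal (Cup d α * r ^ α) := by
  have hB : volume (ball (0 : EuclideanSpace ℝ (Fin d)) 1) ≠ ⊤ := measure_ball_lt_top.ne
  set B := volume (ball (0 : EuclideanSpace ℝ (Fin d)) 1) with hBdef
  have hnn : ∀ i : ℕ, 0 ≤ ((2:ℝ)^(2*α))^i * min 2 (r^2 * (16⁻¹:ℝ)^i) := by
    intro i
    have h : (0:ℝ) ≤ min 2 (r^2 * (16⁻¹:ℝ)^i) := le_min (by norm_num) (by positivity)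
    positivity
  calc ∫⁻ z, gfun ξ z ∂(lacunaryStableMeasure d α)
      = ∫⁻ z, (fden d α * gfun ξ) z ∂volume := by
        rw [lac_eq, lintegral_withDensity_eq_lintegral_mul volume meas_fden (meas_gfun ξ)]
    _ = ∫⁻ z, (Uset d).indicator (fun z => dens d α z * gfun ξ z) z ∂volume := by
        apply lintegral_congr
        intro z
        by_cases hz : z ∈ Uset d
        · simp [fden, Set.indicator_of_mem hz]
        · simp [fden, Set.indicator_of_notMem hz]
    _ ≤ ∫⁻ z, ∑' i : ℕ, (Aset d i).indicator (fun z => dens d α z * gfun ξ z) z ∂volume := by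
        apply lintegral_mono
        intro z
        by_cases hz : z ∈ Uset d
        · obtain ⟨i, hi⟩ := mem_iUnion.mp hz
          rw [Set.indicator_of_mem hz]
          calc dens d α z * gfun ξ z
              = (Aset d i).indicator (fun z => dens d α z * gfun ξ z) z :=
                (Set.indicator_of_mem hi (fun z => dens d α z * gfun ξ z)).symm
            _ ≤ _ := ENNReal.le_tsum i
        · simp [Set.indicator_of_notMem hz]
    _ = ∑' i : ℕ, ∫⁻ z, (Aset d i).indicator (fun z => dens d α z * gfun ξ z) z ∂volume :=
        lintegral_tsum fun i =>
          ((meas_dens.mul (meas_gfun ξ)).indicator (meas_Aset i)).aemeasurable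
    _ ≤ ∑' i : ℕ, ENNReal.ofReal ((2:ℝ)^((d:ℝ)+α)
          * (((2:ℝ)^(2*α))^i * min 2 (r^2 * (16⁻¹:ℝ)^i))) * B :=
        ENNReal.tsum_le_tsum fun i => annulus_bound hα hr hξ i
    _ = (∑' i : ℕ, ENNReal.ofReal ((2:ℝ)^((d:ℝ)+α)
          * (((2:ℝ)^(2*α))^i * min 2 (r^2 * (16⁻¹:ℝ)^i)))) * B := ENNReal.tsum_mul_right
    _ = ENNReal.ofReal (∑' i : ℕ, (2:ℝ)^((d:ℝ)+α)
          * (((2:ℝ)^(2*α))^i * min 2 (r^2 * (16⁻¹:ℝ)^i))) * B := by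
        rw [ENNReal.ofReal_tsum_of_nonneg]
        · intro i
          have := hnn i
          positivity
        · exact (summable_aseq' r hα2).mul_left _
    _ ≤ ENNReal.ofReal ((2:ℝ)^((d:ℝ)+α) * (Csum α * r ^ α)) * B := by
        apply mul_le_mul_left
        apply ENNReal.ofReal_le_ofReal
        rw [tsum_mul_left]
        exact mul_le_mul_of_nonneg_left (sum_est' hα hα2 hr) (Real.rpow_nonneg (by norm_num) _)
    _ = ENNReal.ofReal (Cup d α * r ^ α) := by
        have hcs : 0 < Csum α := Csum_pos' hα hα2
        have hra : (0:ℝ) ≤ r ^ α := (Real.rpow_pos_of_pos (by linarith) α).le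
        rw [show B = ENNReal.ofReal B.toReal from (ENNReal.ofReal_toReal hB).symm,
          ← ENNReal.ofReal_mul (mul_nonneg (Real.rpow_nonneg (by norm_num) _)
            (mul_nonneg hcs.le hra))]
        congr 1
        rw [Cup]
        ring

/-! ### Lower bound -/

def S0 (d : ℕ) (j : Fin d) : Set (EuclideanSpace ℝ (Fin d)) :=
  {w | 1/2 ≤ ‖w‖ ∧ ‖w‖ ≤ 1 ∧ ‖w‖/2 ≤ w j}

lemma cont_eval (j : Fin d) : Continuous fun w : EuclideanSpace ℝ (Fin d) => w j :=
  (EuclideanSpace.proj (𝕜 := ℝ) j).continuous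

lemma S0_meas (j : Fin d) : MeasurableSet (S0 d j) := by
  have h : S0 d j = {w : EuclideanSpace ℝ (Fin d) | 1/2 ≤ ‖w‖}
      ∩ ({w | ‖w‖ ≤ 1} ∩ {w | ‖w‖/2 ≤ w j}) := rfl
  rw [h]
  exact (isClosed_le continuous_const continuous_norm).measurableSet.inter
    ((isClosed_le continuous_norm continuous_const).measurableSet.inter
      (isClosed_le (continuous_norm.div_const 2) (cont_eval j)).measurableSet)

lemma S0_vol_pos (j : Fin d) : 0 < volume (S0 d j) := by
  set O : Set (EuclideanSpace ℝ (Fin d)) :=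
    {w | 1/2 < ‖w‖} ∩ ({w | ‖w‖ < 1} ∩ {w | ‖w‖/2 < w j}) with hO
  have hOopen : IsOpen O := (isOpen_lt continuous_const continuous_norm).inter
    ((isOpen_lt continuous_norm continuous_const).inter
      (isOpen_lt (continuous_norm.div_const 2) (cont_eval j)))
  have hne : O.Nonempty := by
    refine ⟨EuclideanSpace.single j (3/4 : ℝ), ?_, ?_, ?_⟩ <;>
      simp [EuclideanSpace.norm_single, EuclideanSpace.single_apply] <;> norm_num
  have hsub : O ⊆ S0 d j := fun w hw => ⟨hw.1.le, hw.2.1.le, hw.2.2.le⟩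
  exact lt_of_lt_of_le (hOopen.measure_pos volume hne) (measure_mono hsub)

lemma S0_vol_fin (j : Fin d) : volume (S0 d j) ≠ ⊤ :=
  ((measure_mono (fun w hw => mem_closedBall_zero_iff.mpr hw.2.1)).trans_lt
    measure_closedBall_lt_top).ne

lemma SN_eq (N : ℕ) (j : Fin d) :
    tt N • S0 d j
      = {z : EuclideanSpace ℝ (Fin d) | tt N/2 ≤ ‖z‖ ∧ ‖z‖ ≤ tt N ∧ ‖z‖/2 ≤ z j} := by
  have hT := tt_pos N
  ext z
  rw [Set.mem_smul_set_iff_inv_smul_mem₀ hT.ne']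
  have hzn : ‖(tt N)⁻¹ • z‖ = (tt N)⁻¹ * ‖z‖ := by
    rw [norm_smul, Real.norm_eq_abs, abs_of_pos (inv_pos.mpr hT)]
  have hzj : ((tt N)⁻¹ • z) j = (tt N)⁻¹ * z j := rfl
  simp only [S0, mem_setOf_eq, hzn, hzj]
  rw [le_inv_mul_iff₀ hT, inv_mul_le_iff₀ hT]
  constructor
  · rintro ⟨h1, h2, h3⟩
    refine ⟨by linarith, by linarith, ?_⟩
    rw [le_inv_mul_iff₀ hT] at h3
    have he : tt N * ((tt N)⁻¹ * ‖z‖ / 2) = ‖z‖/2 := by field_simp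
    linarith [he ▸ h3]
  · rintro ⟨h1, h2, h3⟩
    refine ⟨by linarith, by linarith, ?_⟩
    rw [le_inv_mul_iff₀ hT]
    have he : tt N * ((tt N)⁻¹ * ‖z‖ / 2) = ‖z‖/2 := by field_simp
    linarith [he]

lemma tt_inv (N : ℕ) : (tt N)⁻¹ = (4:ℝ)^N := by
  have h : tt N = ((4:ℝ)^N)⁻¹ := by
    rw [tt, show (4:ℝ) = (2:ℝ)^(2:ℕ) by norm_num, ← pow_mul,
      ← Real.rpow_natCast (2:ℝ) (2*N), ← Real.rpow_neg (by norm_num : (0:ℝ) ≤ 2)]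
    congr 1
    push_cast
    ring
  rw [h, inv_inv]

lemma pow_bridge' (N : ℕ) : ((2:ℝ)^(2*α))^N = ((4:ℝ)^N)^α := pow_bridgeB α N

lemma lint_lower (hα : 0 < α) {r : ℝ} (hr : 1 ≤ r) (j : Fin d) :
    ∃ ξ : EuclideanSpace ℝ (Fin d), ‖ξ‖ ≤ r ∧
      ENNReal.ofReal (((1 - Real.cos 4⁻¹) * (volume (S0 d j)).toReal / (4:ℝ)^α) * r^α)
        ≤ ∫⁻ z, gfun ξ z ∂(lacunaryStableMeasure d α) := by
  have hr0 : (0:ℝ) < r := lt_of_lt_of_le one_pos hr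
  set N := ⌊Real.logb 4 r⌋₊ with hN
  have h4N : (4:ℝ)^N ≤ r := by
    have hlb : (N:ℝ) ≤ Real.logb 4 r := Nat.floor_le (Real.logb_nonneg (by norm_num) hr)
    calc (4:ℝ)^N = (4:ℝ)^((N:ℕ):ℝ) := (Real.rpow_natCast _ _).symm
      _ ≤ (4:ℝ)^(Real.logb 4 r) := Real.rpow_le_rpow_of_exponent_le (by norm_num) hlb
      _ = r := Real.rpow_logb (by norm_num) (by norm_num) hr0
  have hr4 : r < (4:ℝ)^(N+1) := by
    have hub : Real.logb 4 r < (N:ℝ) + 1 := Nat.lt_floor_add_one _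
    calc r = (4:ℝ)^(Real.logb 4 r) := (Real.rpow_logb (by norm_num) (by norm_num) hr0).symm
      _ < (4:ℝ)^(((N:ℕ):ℝ)+1) := Real.rpow_lt_rpow_of_exponent_lt (by norm_num) hub
      _ = (4:ℝ)^(N+1) := by
          rw [show ((N:ℕ):ℝ)+1 = ((N+1:ℕ):ℝ) by push_cast; ring, Real.rpow_natCast]
  have hT := tt_pos N
  set ξ : EuclideanSpace ℝ (Fin d) := (tt N)⁻¹ • EuclideanSpace.single j (1:ℝ) with hξ
  have hξnorm : ‖ξ‖ = (4:ℝ)^N := by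
    rw [hξ, norm_smul, Real.norm_eq_abs, abs_of_pos (inv_pos.mpr hT),
      EuclideanSpace.norm_single, norm_one, mul_one, tt_inv]
  have hξr : ‖ξ‖ ≤ r := by rw [hξnorm]; exact h4N
  refine ⟨ξ, hξr, ?_⟩
  set SN : Set (EuclideanSpace ℝ (Fin d)) :=
    {z | tt N/2 ≤ ‖z‖ ∧ ‖z‖ ≤ tt N ∧ ‖z‖/2 ≤ z j} with hSN
  have hSNmeas : MeasurableSet SN := by
    rw [hSN, ← SN_eq]
    exact (S0_meas j).const_smul₀ (tt N)
  have hε : (0:ℝ) < 1 - Real.cos 4⁻¹ := by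
    have h := Real.cos_lt_cos_of_nonneg_of_le_pi (le_refl (0:ℝ))
      (by linarith [Real.pi_gt_three] : (4⁻¹:ℝ) ≤ Real.pi) (by norm_num)
    rw [Real.cos_zero] at h
    linarith
  have hinner : ∀ z ∈ SN, (4⁻¹:ℝ) ≤ inner ℝ ξ z ∧ (inner ℝ ξ z:ℝ) ≤ 1 := by
    intro z hz
    obtain ⟨hz1, hz2, hz3⟩ := hz
    have hzj_le : z j ≤ ‖z‖ := by
      have h1 : |(inner ℝ (EuclideanSpace.single j (1:ℝ)) z : ℝ)| ≤ ‖z‖ := by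
        have := abs_real_inner_le_norm (EuclideanSpace.single j (1:ℝ)) z
        rwa [EuclideanSpace.norm_single, norm_one, one_mul] at this
      have h2 : (inner ℝ (EuclideanSpace.single j (1:ℝ)) z : ℝ) = z j := by
        rw [EuclideanSpace.inner_single_left]
        simp
      rw [h2] at h1
      exact (abs_le.mp h1).2
    have hval : (inner ℝ ξ z : ℝ) = (tt N)⁻¹ * z j := by
      rw [hξ, real_inner_smul_left]
      congr 1
      rw [EuclideanSpace.inner_single_left]
      simp
    have he : (tt N)⁻¹ * tt N = 1 := inv_mul_cancel₀ hT.ne'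
    constructor
    · rw [hval]
      have h3 : tt N / 4 ≤ z j := by linarith
      have h4 : (tt N)⁻¹ * (tt N / 4) ≤ (tt N)⁻¹ * z j :=
        mul_le_mul_of_nonneg_left h3 (inv_pos.mpr hT).le
      have h5 : (tt N)⁻¹ * (tt N / 4) = 4⁻¹ := by field_simp
      linarith
    · rw [hval]
      have h4 : (tt N)⁻¹ * z j ≤ (tt N)⁻¹ * tt N :=
        mul_le_mul_of_nonneg_left (hzj_le.trans hz2) (inv_pos.mpr hT).le
      rw [he] at h4
      exact h4
  have hcos : ∀ z ∈ SN, ENNReal.ofReal (1 - Real.cos 4⁻¹) ≤ gfun ξ z := by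
    intro z hz
    obtain ⟨h1, h2⟩ := hinner z hz
    apply ENNReal.ofReal_le_ofReal
    have : Real.cos (inner ℝ ξ z) ≤ Real.cos 4⁻¹ :=
      Real.cos_le_cos_of_nonneg_of_le_pi (by norm_num)
        (by linarith [Real.pi_gt_three]) h1
    linarith
  -- measure of SN under the Lévy measure
  set v0 := volume (S0 d j) with hv0
  have hSU : SN ⊆ Uset d := by
    intro z hz
    exact mem_iUnion.mpr ⟨N, hz.1, hz.2.1⟩
  have hnuSN : ENNReal.ofReal (tt N ^ (-α)) * v0 ≤ lacunaryStableMeasure d α SN := by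
    rw [lac_eq, withDensity_apply _ hSNmeas]
    have hstep : ∫⁻ _ in SN, ENNReal.ofReal (tt N ^ (-((d:ℝ)+α))) ∂volume
        ≤ ∫⁻ z in SN, fden d α z ∂volume := by
      apply setLIntegral_mono' hSNmeas
      intro z hz
      rw [fden, Set.indicator_of_mem (hSU hz)]
      apply ENNReal.ofReal_le_ofReal
      have hz0 : (0:ℝ) < ‖z‖ := lt_of_lt_of_le (div_pos hT two_pos) hz.1
      exact Real.rpow_le_rpow_of_nonpos hz0 hz.2.1
        (neg_nonpos.mpr (add_nonneg (Nat.cast_nonneg d) hα.le))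
    refine le_trans ?_ hstep
    rw [setLIntegral_const]
    have hvolSN : volume SN = ENNReal.ofReal (tt N ^ d) * v0 := by
      rw [hSN, ← SN_eq, Measure.addHaar_smul_of_nonneg volume hT.le,
        finrank_euclideanSpace_fin, hv0]
    rw [hvolSN, ← mul_assoc, ← ENNReal.ofReal_mul (Real.rpow_nonneg hT.le _)]
    apply mul_le_mul_left
    apply ENNReal.ofReal_le_ofReal
    rw [← Real.rpow_natCast (tt N) d, ← Real.rpow_add hT]
    apply le_of_eq
    congr 1
    push_cast
    ring
  have hfin : v0 ≠ ⊤ := S0_vol_fin j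
  have hlow : ENNReal.ofReal ((1 - Real.cos 4⁻¹) * (tt N ^ (-α)) * v0.toReal)
      ≤ ∫⁻ z, gfun ξ z ∂(lacunaryStableMeasure d α) := by
    calc ENNReal.ofReal ((1 - Real.cos 4⁻¹) * (tt N ^ (-α)) * v0.toReal)
        = ENNReal.ofReal (1 - Real.cos 4⁻¹)
            * (ENNReal.ofReal (tt N ^ (-α)) * v0) := by
          rw [ENNReal.ofReal_mul (mul_nonneg hε.le (Real.rpow_nonneg hT.le _)),
            ENNReal.ofReal_mul hε.le, mul_assoc]
          congr
          exact ENNReal.ofReal_toReal hfin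
      _ ≤ ENNReal.ofReal (1 - Real.cos 4⁻¹) * lacunaryStableMeasure d α SN :=
          mul_le_mul_right hnuSN _
      _ = ∫⁻ _ in SN, ENNReal.ofReal (1 - Real.cos 4⁻¹) ∂(lacunaryStableMeasure d α) :=
          (setLIntegral_const _ _).symm
      _ ≤ ∫⁻ z in SN, gfun ξ z ∂(lacunaryStableMeasure d α) :=
          setLIntegral_mono' hSNmeas hcos
      _ ≤ ∫⁻ z, gfun ξ z ∂(lacunaryStableMeasure d α) := setLIntegral_le_lintegral _ _
  refine le_trans ?_ hlow
  apply ENNReal.ofReal_le_ofReal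
  have hbridge : tt N ^ (-α) = ((4:ℝ)^N) ^ α := by
    rw [tt_rpow_neg, pow_bridge']
  have hr4' : r / 4 ≤ (4:ℝ)^N := by
    have h44 : (4:ℝ)^(N+1) = 4 * (4:ℝ)^N := by ring
    nlinarith
  have hstep2 : (r/4) ^ α ≤ ((4:ℝ)^N) ^ α :=
    Real.rpow_le_rpow (by positivity) hr4' hα.le
  have hdiv : (r/4) ^ α = r ^ α / (4:ℝ)^α := Real.div_rpow hr0.le (by norm_num : (0:ℝ) ≤ 4) α
  have hv0nn : (0:ℝ) ≤ v0.toReal := ENNReal.toReal_nonneg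
  have h4α : (0:ℝ) < (4:ℝ)^α := Real.rpow_pos_of_pos (by norm_num) α
  rw [hbridge]
  calc (1 - Real.cos 4⁻¹) * v0.toReal / (4:ℝ)^α * r^α
      = (1 - Real.cos 4⁻¹) * (r^α / (4:ℝ)^α) * v0.toReal := by ring
    _ ≤ (1 - Real.cos 4⁻¹) * ((4:ℝ)^N)^α * v0.toReal := by
        apply mul_le_mul_of_nonneg_right _ hv0nn
        apply mul_le_mul_of_nonneg_left _ hε.le
        rw [← hdiv]
        exact hstep2

end LacAux

open LacAux in
/-- For the measure above with characteristic exponent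
`q(ξ) = ∫ (1 - cos⟨ξ, z⟩) ν(dz)` and `Φ₁(r) = sup_{|ξ| ≤ r} q(ξ)`, there is `c ≥ 1`
with `c⁻¹ r^α ≤ Φ₁(r) ≤ c r^α` for all `r ≥ 1`. -/
theorem lacunaryStableMeasure_sup_charExponent_bounds
    (d : ℕ) (hd : 1 ≤ d) (α : ℝ) (hα : 0 < α) (hα2 : α < 2)
    (q : EuclideanSpace ℝ (Fin d) → ℝ)
    (hq : ∀ ξ, q ξ = ∫ z, (1 - Real.cos (inner ℝ ξ z)) ∂(lacunaryStableMeasure d α))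
    (Φ₁ : ℝ → ℝ)
    (hΦ₁ : ∀ r, Φ₁ r = sSup (q '' closedBall (0 : EuclideanSpace ℝ (Fin d)) r)) :
    ∃ c : ℝ, 1 ≤ c ∧ ∀ r : ℝ, 1 ≤ r →
      c⁻¹ * r ^ α ≤ Φ₁ r ∧ Φ₁ r ≤ c * r ^ α := by
  have hqeq : ∀ ξ, q ξ = (∫⁻ z, gfun ξ z ∂(lacunaryStableMeasure d α)).toReal := by
    intro ξ
    rw [hq ξ]
    exact integral_eq_lintegral_of_nonneg_ae
      (Filter.Eventually.of_forall fun z => one_sub_cos_nonneg _)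
      ((continuous_const.sub (Real.continuous_cos.comp (cont_inner ξ))).aestronglyMeasurable)
  set j : Fin d := ⟨0, hd⟩ with hj
  set CU := Cup d α with hCU
  set CL := (1 - Real.cos 4⁻¹) * (volume (S0 d j)).toReal / (4:ℝ)^α with hCL
  have hε : (0:ℝ) < 1 - Real.cos 4⁻¹ := by
    have h := Real.cos_lt_cos_of_nonneg_of_le_pi (le_refl (0:ℝ))
      (by linarith [Real.pi_gt_three] : (4⁻¹:ℝ) ≤ Real.pi) (by norm_num)
    rw [Real.cos_zero] at h
    linarith
  have hv0 : (0:ℝ) < (volume (S0 d j)).toReal :=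
    ENNReal.toReal_pos (S0_vol_pos j).ne' (S0_vol_fin j)
  have h4α : (0:ℝ) < (4:ℝ)^α := Real.rpow_pos_of_pos (by norm_num) α
  have hCL0 : 0 < CL := by rw [hCL]; positivity
  have hCU0 : 0 ≤ CU := by
    rw [hCU, Cup]
    exact mul_nonneg ENNReal.toReal_nonneg
      (mul_nonneg (Real.rpow_nonneg (by norm_num) _) (Csum_pos' hα hα2).le)
  set c := max (max CU CL⁻¹) 1 with hc
  have hc1 : (1:ℝ) ≤ c := le_max_right _ _
  have hc0 : (0:ℝ) < c := lt_of_lt_of_le one_pos hc1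
  refine ⟨c, hc1, fun r hr => ?_⟩
  have hr0 : (0:ℝ) < r := lt_of_lt_of_le one_pos hr
  have hrα : (0:ℝ) < r ^ α := Real.rpow_pos_of_pos hr0 _
  have hub : ∀ ξ' ∈ closedBall (0 : EuclideanSpace ℝ (Fin d)) r, q ξ' ≤ CU * r ^ α := by
    intro ξ' hξ'
    rw [mem_closedBall_zero_iff] at hξ'
    rw [hqeq]
    calc (∫⁻ z, gfun ξ' z ∂(lacunaryStableMeasure d α)).toReal
        ≤ (ENNReal.ofReal (CU * r^α)).toReal :=
          ENNReal.toReal_mono ENNReal.ofReal_ne_top (lint_upper hα hα2 hr hξ')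
      _ = CU * r^α := ENNReal.toReal_ofReal (by positivity)
  have hbdd : BddAbove (q '' closedBall (0 : EuclideanSpace ℝ (Fin d)) r) := by
    refine ⟨CU * r^α, ?_⟩
    rintro y ⟨ξ', hξ', rfl⟩
    exact hub ξ' hξ'
  constructor
  · obtain ⟨ξ, hξr, hlint⟩ := lint_lower (α := α) hα hr j
    have hmem : ξ ∈ closedBall (0 : EuclideanSpace ℝ (Fin d)) r :=
      mem_closedBall_zero_iff.mpr hξr
    have hfin : ∫⁻ z, gfun ξ z ∂(lacunaryStableMeasure d α) ≠ ⊤ :=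
      (lt_of_le_of_lt (lint_upper hα hα2 hr hξr) ENNReal.ofReal_lt_top).ne
    have hql : CL * r ^ α ≤ q ξ := by
      rw [hqeq]
      calc CL * r^α = (ENNReal.ofReal (CL * r^α)).toReal :=
          (ENNReal.toReal_ofReal (by positivity)).symm
        _ ≤ (∫⁻ z, gfun ξ z ∂(lacunaryStableMeasure d α)).toReal :=
          ENNReal.toReal_mono hfin hlint
    have hqΦ : q ξ ≤ Φ₁ r := by
      rw [hΦ₁]
      exact le_csSup hbdd ⟨ξ, hmem, rfl⟩
    have hcinv : c⁻¹ ≤ CL := by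
      have h1 : CL⁻¹ ≤ c := le_trans (le_max_right _ _) (le_max_left _ _)
      calc c⁻¹ ≤ (CL⁻¹)⁻¹ := by
            apply inv_anti₀ (inv_pos.mpr hCL0) h1
        _ = CL := inv_inv CL
    calc c⁻¹ * r^α ≤ CL * r^α := mul_le_mul_of_nonneg_right hcinv hrα.le
      _ ≤ q ξ := hql
      _ ≤ Φ₁ r := hqΦ
  · rw [hΦ₁]
    apply Real.sSup_le
    · rintro y ⟨ξ', hξ', rfl⟩
      calc q ξ' ≤ CU * r^α := hub ξ' hξ'
        _ ≤ c * r^α := mul_le_mul_of_nonneg_right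
            (le_trans (le_max_left _ _) (le_max_left _ _)) hrα.le
    · positivity
end

section
/- Let d ≥ 1, α ∈ (0, 2), and let ν be the measure on ℝ^d with density z ↦ |z|^{−d−α} · 1_{⋃_{i≥0} {2^{−2i−1} ≤ |z| ≤ 2^{−2i}}}(z) with respect to Lebesgue measure, with characteristic exponent q(ξ) = ∫ (1 − cos⟨ξ, z⟩) ν(dz). Then there exists a constant c ≥ 1 such that c^{−1} |ξ|^{α} ≤ q(ξ) ≤ c |ξ|^{α} for all ξ ∈ ℝ^d with |ξ| ≥ 1. -/
open MeasureTheory Metric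
open scoped ENNReal

namespace LacunaryAux

lemma one_sub_cos_le_min (t : ℝ) : 1 - Real.cos t ≤ min 2 (t ^ 2) := by
  refine le_min ?_ ?_
  · nlinarith [Real.neg_one_le_cos t]
  · nlinarith [Real.one_sub_sq_div_two_le_cos (x := t), sq_nonneg t]

lemma sq_div_eight_le_one_sub_cos {t : ℝ} (ht : |t| ≤ 1) :
    t ^ 2 / 8 ≤ 1 - Real.cos t := by
  have hπ : |t| ≤ Real.pi := le_trans ht (by linarith [Real.two_le_pi])
  have h := Real.cos_le_one_sub_mul_cos_sq hπ
  have hπ2 : (0:ℝ) < Real.pi ^ 2 := by positivity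
  have h2 : 1 / 8 * t ^ 2 ≤ 2 / Real.pi ^ 2 * t ^ 2 := by
    apply mul_le_mul_of_nonneg_right _ (sq_nonneg t)
    rw [div_le_div_iff₀ (by norm_num) hπ2]
    nlinarith [Real.pi_le_four, Real.pi_pos]
  linarith

lemma exists_pow_four {M : ℝ} (hM : 1 ≤ M) :
    ∃ i : ℕ, M ≤ 4 ^ i ∧ (4:ℝ) ^ i ≤ 4 * M := by
  have hM0 : 0 < M := lt_of_lt_of_le one_pos hM
  refine ⟨⌈Real.logb 4 M⌉₊, ?_, ?_⟩
  · have h1 : Real.logb 4 M ≤ (⌈Real.logb 4 M⌉₊ : ℝ) := Nat.le_ceil _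
    calc M = (4:ℝ) ^ Real.logb 4 M := (Real.rpow_logb (by norm_num) (by norm_num) hM0).symm
    _ ≤ (4:ℝ) ^ ((⌈Real.logb 4 M⌉₊ : ℕ) : ℝ) :=
        Real.rpow_le_rpow_of_exponent_le (by norm_num) h1
    _ = 4 ^ ⌈Real.logb 4 M⌉₊ := Real.rpow_natCast _ _
  · have hlog : 0 ≤ Real.logb 4 M := Real.logb_nonneg (by norm_num) hM
    have h2 : ((⌈Real.logb 4 M⌉₊ : ℕ) : ℝ) ≤ Real.logb 4 M + 1 := by
      have := Nat.ceil_lt_add_one hlog; linarith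
    calc (4:ℝ) ^ ⌈Real.logb 4 M⌉₊ = (4:ℝ) ^ ((⌈Real.logb 4 M⌉₊ : ℕ) : ℝ) :=
        (Real.rpow_natCast _ _).symm
    _ ≤ (4:ℝ) ^ (Real.logb 4 M + 1) := Real.rpow_le_rpow_of_exponent_le (by norm_num) h2
    _ = 4 * M := by
        rw [Real.rpow_add (by norm_num), Real.rpow_logb (by norm_num) (by norm_num) hM0,
          Real.rpow_one]; ring

lemma pow_rpow_comm (x : ℝ) (hx : 0 ≤ x) (i : ℕ) (y : ℝ) :
    (x ^ i) ^ y = (x ^ y) ^ i := by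
  rw [← Real.rpow_natCast x i, ← Real.rpow_mul hx, mul_comm ((i:ℕ):ℝ) y,
    Real.rpow_mul hx, Real.rpow_natCast]

lemma rpow_mul_pow_inv {x : ℝ} (hx : 0 < x) (d : ℕ) (α : ℝ) :
    x ^ ((d:ℝ) + α) * (x⁻¹) ^ d = x ^ α := by
  rw [Real.rpow_add hx, Real.rpow_natCast, inv_pow, mul_comm ((x:ℝ) ^ d) (x ^ α), mul_assoc,
    mul_inv_cancel₀ (pow_ne_zero _ hx.ne'), mul_one]

lemma inv_rpow_neg {x : ℝ} (hx : 0 ≤ x) (c : ℝ) : (x⁻¹) ^ (-c) = x ^ c := by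
  rw [Real.inv_rpow hx, Real.rpow_neg hx, inv_inv]

lemma hb_conv (i : ℕ) : (2:ℝ) ^ (-(2 * (i:ℝ))) = ((4:ℝ) ^ i)⁻¹ := by
  rw [show -(2 * (i:ℝ)) = ((-((2 * i : ℕ) : ℤ) : ℤ) : ℝ) by push_cast; ring, Real.rpow_intCast,
    zpow_neg, zpow_natCast, pow_mul]
  norm_num

lemma ha_conv (i : ℕ) : (2:ℝ) ^ (-(2 * (i:ℝ) + 1)) = ((2:ℝ) * 4 ^ i)⁻¹ := by
  rw [show -(2 * (i:ℝ) + 1) = ((-((2 * i + 1 : ℕ) : ℤ) : ℤ) : ℝ) by push_cast; ring,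
    Real.rpow_intCast, zpow_neg, zpow_natCast, pow_add, pow_mul, pow_one]
  norm_num [mul_comm]

lemma series_bound {α : ℝ} (hα : 0 < α) (hα2 : α < 2) :
    ∃ C : ℝ, 0 < C ∧ ∀ M : ℝ, 1 ≤ M →
      Summable (fun i : ℕ => min 2 (M ^ 2 * ((16:ℝ)⁻¹) ^ i) * ((4:ℝ) ^ α) ^ i) ∧
      ∑' i : ℕ, min 2 (M ^ 2 * ((16:ℝ)⁻¹) ^ i) * ((4:ℝ) ^ α) ^ i ≤ C * M ^ α := by
  set r : ℝ := (4:ℝ) ^ α with hrdef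
  set s : ℝ := (4:ℝ) ^ (α - 2) with hsdef
  have hr1 : 1 < r := (Real.one_lt_rpow_iff_of_pos (by norm_num)).mpr
    (Or.inl ⟨by norm_num, hα⟩)
  have hr0 : 0 < r := lt_trans one_pos hr1
  have hs0 : 0 < s := Real.rpow_pos_of_pos (by norm_num) _
  have hs1 : s < 1 := Real.rpow_lt_one_of_one_lt_of_neg (by norm_num) (by linarith)
  have hrs : (16:ℝ)⁻¹ * r = s := by
    rw [hrdef, hsdef, show α - 2 = α + (-2) by ring, Real.rpow_add (by norm_num : (0:ℝ) < 4),
      mul_comm]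
    congr 1
    rw [show ((-2):ℝ) = ((-2 : ℤ) : ℝ) by norm_num, Real.rpow_intCast]
    norm_num
  refine ⟨2 * (4:ℝ) ^ α / (r - 1) + (1 - s)⁻¹,
    add_pos (div_pos (by positivity) (sub_pos.2 hr1)) (inv_pos.2 (sub_pos.2 hs1)), ?_⟩
  intro M hM
  have hM0 : 0 < M := lt_of_lt_of_le one_pos hM
  set f : ℕ → ℝ := fun i => min 2 (M ^ 2 * ((16:ℝ)⁻¹) ^ i) * r ^ i with hfdef
  have hterm_nonneg : ∀ i, 0 ≤ f i := fun i =>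
    mul_nonneg (le_min (by norm_num) (by positivity)) (pow_nonneg hr0.le i)
  have hle_geo : ∀ i, f i ≤ M ^ 2 * s ^ i := by
    intro i
    calc f i ≤ (M ^ 2 * ((16:ℝ)⁻¹) ^ i) * r ^ i :=
        mul_le_mul_of_nonneg_right (min_le_right _ _) (pow_nonneg hr0.le i)
    _ = M ^ 2 * s ^ i := by rw [mul_assoc, ← mul_pow, hrs]
  have hgeo_sum : Summable (fun i : ℕ => M ^ 2 * s ^ i) :=
    (summable_geometric_of_lt_one hs0.le hs1).mul_left _
  have hsum : Summable f := Summable.of_nonneg_of_le hterm_nonneg hle_geo hgeo_sum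
  refine ⟨hsum, ?_⟩
  obtain ⟨i₀, hi1, hi2⟩ := exists_pow_four hM
  rw [← Summable.sum_add_tsum_nat_add i₀ hsum]
  have hhead : ∑ i ∈ Finset.range i₀, f i ≤ 2 * (4:ℝ) ^ α / (r - 1) * M ^ α := by
    have h1 : ∑ i ∈ Finset.range i₀, f i ≤ ∑ i ∈ Finset.range i₀, 2 * r ^ i :=
      Finset.sum_le_sum fun i _ =>
        mul_le_mul_of_nonneg_right (min_le_left _ _) (pow_nonneg hr0.le i)
    have h2 : ∑ i ∈ Finset.range i₀, (2:ℝ) * r ^ i = 2 * ((r ^ i₀ - 1) / (r - 1)) := by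
      rw [← Finset.mul_sum, geom_sum_eq hr1.ne' i₀]
    have h3 : r ^ i₀ ≤ (4:ℝ) ^ α * M ^ α := by
      have h : r ^ i₀ = ((4:ℝ) ^ i₀) ^ α := (pow_rpow_comm 4 (by norm_num) i₀ α).symm
      rw [h, ← Real.mul_rpow (by norm_num) hM0.le]
      exact Real.rpow_le_rpow (by positivity) hi2 hα.le
    have h4 : 2 * ((r ^ i₀ - 1) / (r - 1)) ≤ 2 * ((4:ℝ) ^ α * M ^ α / (r - 1)) := by
      have hr1' : 0 < r - 1 := sub_pos.2 hr1
      gcongr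
      linarith
    calc ∑ i ∈ Finset.range i₀, f i ≤ 2 * ((r ^ i₀ - 1) / (r - 1)) := by rw [← h2]; exact h1
    _ ≤ 2 * ((4:ℝ) ^ α * M ^ α / (r - 1)) := h4
    _ = 2 * (4:ℝ) ^ α / (r - 1) * M ^ α := by ring
  have htail : ∑' i : ℕ, f (i + i₀) ≤ (1 - s)⁻¹ * M ^ α := by
    have h1 : ∀ i : ℕ, f (i + i₀) ≤ (M ^ 2 * s ^ i₀) * s ^ i := by
      intro i
      calc f (i + i₀) ≤ M ^ 2 * s ^ (i + i₀) := hle_geo _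
      _ = (M ^ 2 * s ^ i₀) * s ^ i := by rw [pow_add]; ring
    have h2 : ∑' i : ℕ, f (i + i₀) ≤ ∑' i : ℕ, (M ^ 2 * s ^ i₀) * s ^ i :=
      Summable.tsum_le_tsum h1 ((summable_nat_add_iff i₀).mpr hsum)
        ((summable_geometric_of_lt_one hs0.le hs1).mul_left _)
    have h3 : ∑' i : ℕ, (M ^ 2 * s ^ i₀) * s ^ i = (M ^ 2 * s ^ i₀) * (1 - s)⁻¹ := by
      rw [tsum_mul_left, tsum_geometric_of_lt_one hs0.le hs1]
    have h4 : M ^ 2 * s ^ i₀ ≤ M ^ α := by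
      have hs' : s ^ i₀ = ((4:ℝ) ^ i₀) ^ (α - 2) := (pow_rpow_comm 4 (by norm_num) i₀ _).symm
      have h5 : ((4:ℝ) ^ i₀) ^ (α - 2) ≤ M ^ (α - 2) :=
        Real.rpow_le_rpow_of_nonpos hM0 hi1 (by linarith)
      calc M ^ 2 * s ^ i₀ ≤ M ^ 2 * M ^ (α - 2) := by
            rw [hs']; exact mul_le_mul_of_nonneg_left h5 (by positivity)
      _ = M ^ α := by
            rw [← Real.rpow_natCast M 2, ← Real.rpow_add hM0]
            norm_num
    calc ∑' i : ℕ, f (i + i₀) ≤ (M ^ 2 * s ^ i₀) * (1 - s)⁻¹ := h3 ▸ h2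
    _ ≤ M ^ α * (1 - s)⁻¹ :=
        mul_le_mul_of_nonneg_right h4 (inv_nonneg.2 (by linarith))
    _ = (1 - s)⁻¹ * M ^ α := mul_comm _ _
  calc ∑ i ∈ Finset.range i₀, f i + ∑' i : ℕ, f (i + i₀)
      ≤ 2 * (4:ℝ) ^ α / (r - 1) * M ^ α + (1 - s)⁻¹ * M ^ α := add_le_add hhead htail
  _ = (2 * (4:ℝ) ^ α / (r - 1) + (1 - s)⁻¹) * M ^ α := by ring

end LacunaryAux

set_option maxHeartbeats 1000000 in
open LacunaryAux in
/-- For the measure above with characteristic exponent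
`q(ξ) = ∫ (1 - cos⟨ξ, z⟩) ν(dz)`, there is `c ≥ 1` with
`c⁻¹ |ξ|^α ≤ q(ξ) ≤ c |ξ|^α` for all `|ξ| ≥ 1`. -/
theorem lacunaryStableMeasure_charExponent_bounds
    (d : ℕ) (hd : 1 ≤ d) (α : ℝ) (hα : 0 < α) (hα2 : α < 2)
    (q : EuclideanSpace ℝ (Fin d) → ℝ)
    (hq : ∀ ξ, q ξ = ∫ z, (1 - Real.cos (inner ℝ ξ z)) ∂(lacunaryStableMeasure d α)) :
    ∃ c : ℝ, 1 ≤ c ∧ ∀ ξ : EuclideanSpace ℝ (Fin d), 1 ≤ ‖ξ‖ →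
      c⁻¹ * ‖ξ‖ ^ α ≤ q ξ ∧ q ξ ≤ c * ‖ξ‖ ^ α := by
  classical
  set p : ℝ := -((d:ℝ) + α) with hpdef
  have hdα : (0:ℝ) < (d:ℝ) + α := by positivity
  have hp_nonpos : p ≤ 0 := by rw [hpdef]; linarith
  set dens : EuclideanSpace ℝ (Fin d) → ℝ≥0∞ :=
    fun z => ENNReal.ofReal (‖z‖ ^ p) with hdensdef
  set S : Set (EuclideanSpace ℝ (Fin d)) :=
    {z | ∃ i : ℕ, (2:ℝ) ^ (-(2 * (i:ℝ) + 1)) ≤ ‖z‖ ∧ ‖z‖ ≤ (2:ℝ) ^ (-(2 * (i:ℝ)))} with hSdef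
  set A : ℕ → Set (EuclideanSpace ℝ (Fin d)) :=
    fun i => {z | (2:ℝ) ^ (-(2 * (i:ℝ) + 1)) ≤ ‖z‖ ∧ ‖z‖ ≤ (2:ℝ) ^ (-(2 * (i:ℝ)))} with hAdef
  have hA_meas : ∀ i, MeasurableSet (A i) := by
    intro i
    have h : A i = (fun z : EuclideanSpace ℝ (Fin d) => ‖z‖) ⁻¹'
        (Set.Icc ((2:ℝ) ^ (-(2 * (i:ℝ) + 1))) ((2:ℝ) ^ (-(2 * (i:ℝ))))) := rfl
    rw [h]
    exact measurable_norm measurableSet_Icc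
  have hSA : S = ⋃ i, A i := by
    ext z; simp only [hSdef, hAdef, Set.mem_iUnion, Set.mem_setOf_eq]
  have hS_meas : MeasurableSet S := by rw [hSA]; exact MeasurableSet.iUnion hA_meas
  have hdens_meas : Measurable (S.indicator dens) :=
    ((measurable_norm.pow measurable_const).ennreal_ofReal).indicator hS_meas
  have hν : lacunaryStableMeasure d α = volume.withDensity (S.indicator dens) := rfl
  -- the lintegral version of q
  set L : EuclideanSpace ℝ (Fin d) → ℝ≥0∞ := fun ξ =>
    ∫⁻ z, S.indicator dens z * ENNReal.ofReal (1 - Real.cos (inner ℝ ξ z)) ∂volume with hLdef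
  have hqL : ∀ ξ, q ξ = (L ξ).toReal := by
    intro ξ
    have hcont : Continuous fun z : EuclideanSpace ℝ (Fin d) =>
        1 - Real.cos (inner ℝ ξ z : ℝ) :=
      continuous_const.sub
        (Real.continuous_cos.comp (Continuous.inner continuous_const continuous_id))
    have hnn : 0 ≤ᵐ[lacunaryStableMeasure d α]
        fun z : EuclideanSpace ℝ (Fin d) => 1 - Real.cos (inner ℝ ξ z : ℝ) :=
      Filter.Eventually.of_forall fun z => sub_nonneg.2 (Real.cos_le_one _)
    rw [hq ξ, integral_eq_lintegral_of_nonneg_ae hnn hcont.aestronglyMeasurable]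
    congr 1
    rw [hν, lintegral_withDensity_eq_lintegral_mul _ hdens_meas
      hcont.measurable.ennreal_ofReal]
    simp only [Pi.mul_apply, hLdef]
  -- basic constants
  have h4pos : ∀ i : ℕ, (0:ℝ) < 4 ^ i := fun i => by positivity
  obtain ⟨v, hvdef⟩ : ∃ v : ℝ, v = (volume (ball (0 : EuclideanSpace ℝ (Fin d)) 1)).toReal :=
    ⟨_, rfl⟩
  have hvol_ne_top : volume (ball (0 : EuclideanSpace ℝ (Fin d)) 1) ≠ ⊤ :=
    (measure_ball_lt_top).ne
  have hv_pos : 0 < v := by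
    rw [hvdef]
    exact ENNReal.toReal_pos (measure_ball_pos volume _ one_pos).ne' hvol_ne_top
  have hvol_eq : volume (ball (0 : EuclideanSpace ℝ (Fin d)) 1) = ENNReal.ofReal v := by
    rw [hvdef, ENNReal.ofReal_toReal hvol_ne_top]
  obtain ⟨C, hC0, hCbound⟩ := series_bound hα hα2
  obtain ⟨K, hKdef⟩ : ∃ K : ℝ, K = (2:ℝ) ^ ((d:ℝ) + α) * v := ⟨_, rfl⟩
  have hK0 : 0 < K := by
    rw [hKdef]; exact mul_pos (Real.rpow_pos_of_pos (by norm_num) _) hv_pos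
  obtain ⟨Cup, hCupdef⟩ : ∃ c : ℝ, c = K * C := ⟨_, rfl⟩
  have hCup0 : 0 < Cup := by rw [hCupdef]; exact mul_pos hK0 hC0
  obtain ⟨clow, hclowdef⟩ : ∃ c : ℝ, c = (4:ℝ) ^ (α - 2) * v / (32 * 8 ^ d) := ⟨_, rfl⟩
  have hclow0 : 0 < clow := by
    rw [hclowdef]
    apply div_pos (mul_pos (Real.rpow_pos_of_pos (by norm_num) _) hv_pos)
    positivity
  -- UPPER BOUND
  have hupper : ∀ ξ : EuclideanSpace ℝ (Fin d), 1 ≤ ‖ξ‖ →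
      L ξ ≤ ENNReal.ofReal (Cup * ‖ξ‖ ^ α) := by
    intro ξ hξM
    obtain ⟨M, hMdef⟩ : ∃ M : ℝ, M = ‖ξ‖ := ⟨_, rfl⟩
    rw [← hMdef]
    have hξ : 1 ≤ M := by rw [hMdef]; exact hξM
    have hM0 : 0 < M := lt_of_lt_of_le one_pos hξ
    obtain ⟨Bnd, hBnddef⟩ : ∃ B : ℕ → ℝ≥0∞, B = fun i =>
        ENNReal.ofReal (((2:ℝ) * 4 ^ i) ^ ((d:ℝ) + α)) *
          ENNReal.ofReal (min 2 (M ^ 2 * ((16:ℝ)⁻¹) ^ i)) := ⟨_, rfl⟩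
    have hpointwise : ∀ z, S.indicator dens z * ENNReal.ofReal (1 - Real.cos (inner ℝ ξ z)) ≤
        ∑' i, (A i).indicator (fun _ => Bnd i) z := by
      intro z
      by_cases hz : z ∈ S
      · obtain ⟨j, hj1, hj2⟩ := hz
        have hzA : z ∈ A j := ⟨hj1, hj2⟩
        refine le_trans ?_ (ENNReal.le_tsum j)
        rw [Set.indicator_of_mem (show z ∈ S from ⟨j, hj1, hj2⟩) dens,
          Set.indicator_of_mem hzA]
        simp only [hdensdef, hBnddef]
        have haj_pos : (0:ℝ) < (2:ℝ) ^ (-(2 * (j:ℝ) + 1)) :=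
          Real.rpow_pos_of_pos (by norm_num) _
        refine mul_le_mul' ?_ ?_
        · apply ENNReal.ofReal_le_ofReal
          have h1 : ‖z‖ ^ p ≤ ((2:ℝ) ^ (-(2 * (j:ℝ) + 1))) ^ p :=
            Real.rpow_le_rpow_of_nonpos haj_pos hj1 hp_nonpos
          rw [ha_conv j] at h1
          rwa [hpdef, inv_rpow_neg (by positivity) ((d:ℝ) + α)] at h1
        · apply ENNReal.ofReal_le_ofReal
          refine le_trans (one_sub_cos_le_min _) (min_le_min le_rfl ?_)
          have h1 : |(inner ℝ ξ z : ℝ)| ≤ ‖ξ‖ * ‖z‖ := abs_real_inner_le_norm ξ z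
          rw [← hMdef] at h1
          have h2 : ‖z‖ ≤ ((4:ℝ) ^ j)⁻¹ := by rw [← hb_conv j]; exact hj2
          have h3 : (((4:ℝ) ^ j)⁻¹) ^ 2 = ((16:ℝ)⁻¹) ^ j := by
            rw [inv_pow, ← pow_mul, mul_comm j 2, pow_mul, ← inv_pow]
            norm_num
          have hMb : |(inner ℝ ξ z : ℝ)| ≤ M * ((4:ℝ) ^ j)⁻¹ :=
            le_trans h1 (mul_le_mul_of_nonneg_left h2 hM0.le)
          rw [← h3]
          calc (inner ℝ ξ z : ℝ) ^ 2 = |(inner ℝ ξ z : ℝ)| ^ 2 := (sq_abs _).symm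
          _ ≤ (M * ((4:ℝ) ^ j)⁻¹) ^ 2 := by
              nlinarith [hMb, abs_nonneg (inner ℝ ξ z : ℝ)]
          _ = M ^ 2 * (((4:ℝ) ^ j)⁻¹) ^ 2 := by ring
      · rw [Set.indicator_of_notMem hz]
        simp
    have hstep1 : L ξ ≤ ∑' i, Bnd i * volume (A i) := by
      calc L ξ ≤ ∫⁻ z, ∑' i, (A i).indicator (fun _ => Bnd i) z ∂volume :=
          lintegral_mono hpointwise
      _ = ∑' i, ∫⁻ z, (A i).indicator (fun _ => Bnd i) z ∂volume :=
          lintegral_tsum fun i => (measurable_const.indicator (hA_meas i)).aemeasurable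
      _ = ∑' i, Bnd i * volume (A i) := by
          refine tsum_congr fun i => ?_
          rw [lintegral_indicator (hA_meas i), setLIntegral_const]
    have hsub : ∀ i, A i ⊆ closedBall (0 : EuclideanSpace ℝ (Fin d)) (((4:ℝ) ^ i)⁻¹) := by
      intro i z hz
      rw [mem_closedBall_zero_iff, ← hb_conv i]
      exact hz.2
    have hballvol : ∀ i : ℕ, volume (closedBall (0 : EuclideanSpace ℝ (Fin d)) (((4:ℝ) ^ i)⁻¹))
        = ENNReal.ofReal ((((4:ℝ) ^ i)⁻¹) ^ d * v) := by
      intro i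
      rw [Measure.addHaar_closedBall _ _ (by positivity), hvol_eq, finrank_euclideanSpace_fin,
        ← ENNReal.ofReal_mul (by positivity)]
    have hstep2 : L ξ ≤ ∑' i, ENNReal.ofReal
        (K * (min 2 (M ^ 2 * ((16:ℝ)⁻¹) ^ i) * ((4:ℝ) ^ α) ^ i)) := by
      refine le_trans hstep1 (ENNReal.tsum_le_tsum fun i => ?_)
      have h1 : Bnd i * volume (A i) ≤ Bnd i * ENNReal.ofReal ((((4:ℝ) ^ i)⁻¹) ^ d * v) := by
        rw [← hballvol i]
        exact mul_le_mul_right (measure_mono (hsub i)) _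
      refine le_trans h1 (le_of_eq ?_)
      have hmin_nonneg : (0:ℝ) ≤ min 2 (M ^ 2 * ((16:ℝ)⁻¹) ^ i) :=
        le_min (by norm_num) (by positivity)
      have hQ_nonneg : (0:ℝ) ≤ ((2:ℝ) * 4 ^ i) ^ ((d:ℝ) + α) :=
        Real.rpow_nonneg (by positivity) _
      simp only [hBnddef]
      rw [← ENNReal.ofReal_mul hQ_nonneg,
        ← ENNReal.ofReal_mul (mul_nonneg hQ_nonneg hmin_nonneg)]
      congr 1
      have key : ((2:ℝ) * 4 ^ i) ^ ((d:ℝ) + α) * (((4:ℝ) ^ i)⁻¹) ^ d =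
          (2:ℝ) ^ ((d:ℝ) + α) * ((4:ℝ) ^ α) ^ i := by
        rw [Real.mul_rpow (by norm_num) (h4pos i).le, mul_assoc,
          rpow_mul_pow_inv (h4pos i) d α, pow_rpow_comm 4 (by norm_num) i α]
      calc ((2:ℝ) * 4 ^ i) ^ ((d:ℝ) + α) * min 2 (M ^ 2 * ((16:ℝ)⁻¹) ^ i) *
            ((((4:ℝ) ^ i)⁻¹) ^ d * v)
          = (((2:ℝ) * 4 ^ i) ^ ((d:ℝ) + α) * (((4:ℝ) ^ i)⁻¹) ^ d) *
            (min 2 (M ^ 2 * ((16:ℝ)⁻¹) ^ i) * v) := by ring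
      _ = ((2:ℝ) ^ ((d:ℝ) + α) * ((4:ℝ) ^ α) ^ i) *
            (min 2 (M ^ 2 * ((16:ℝ)⁻¹) ^ i) * v) := by rw [key]
      _ = K * (min 2 (M ^ 2 * ((16:ℝ)⁻¹) ^ i) * ((4:ℝ) ^ α) ^ i) := by
            rw [hKdef]; ring
    obtain ⟨hsummable, hsumle⟩ := hCbound M hξ
    have hcsum : Summable (fun i : ℕ =>
        K * (min 2 (M ^ 2 * ((16:ℝ)⁻¹) ^ i) * ((4:ℝ) ^ α) ^ i)) := hsummable.mul_left K
    have hstep3 : (∑' i, ENNReal.ofReal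
        (K * (min 2 (M ^ 2 * ((16:ℝ)⁻¹) ^ i) * ((4:ℝ) ^ α) ^ i)))
        = ENNReal.ofReal (∑' i, K * (min 2 (M ^ 2 * ((16:ℝ)⁻¹) ^ i) * ((4:ℝ) ^ α) ^ i)) := by
      refine (ENNReal.ofReal_tsum_of_nonneg (fun i => ?_) hcsum).symm
      have h : (0:ℝ) ≤ min 2 (M ^ 2 * ((16:ℝ)⁻¹) ^ i) := le_min (by norm_num) (by positivity)
      have h2 : (0:ℝ) ≤ ((4:ℝ) ^ α) ^ i := by positivity
      exact mul_nonneg hK0.le (mul_nonneg h h2)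
    have hstep4 : (∑' i, K * (min 2 (M ^ 2 * ((16:ℝ)⁻¹) ^ i) * ((4:ℝ) ^ α) ^ i))
        ≤ Cup * M ^ α := by
      rw [tsum_mul_left, hCupdef, mul_assoc]
      exact mul_le_mul_of_nonneg_left hsumle hK0.le
    calc L ξ ≤ _ := hstep2
    _ = _ := hstep3
    _ ≤ ENNReal.ofReal (Cup * M ^ α) := ENNReal.ofReal_le_ofReal hstep4
  -- LOWER BOUND
  have hlower : ∀ ξ : EuclideanSpace ℝ (Fin d), 1 ≤ ‖ξ‖ →
      ENNReal.ofReal (clow * ‖ξ‖ ^ α) ≤ L ξ := by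
    intro ξ hξM
    obtain ⟨M, hMdef⟩ : ∃ M : ℝ, M = ‖ξ‖ := ⟨_, rfl⟩
    rw [← hMdef]
    have hξ : 1 ≤ M := by rw [hMdef]; exact hξM
    have hM0 : 0 < M := lt_of_lt_of_le one_pos hξ
    obtain ⟨i₀, hi1, hi2⟩ := exists_pow_four hξ
    obtain ⟨u, hudef⟩ : ∃ u : ℝ, u = (4:ℝ) ^ i₀ := ⟨_, rfl⟩
    have hu0 : 0 < u := by rw [hudef]; exact h4pos i₀
    have hi1' : M ≤ u := by rw [hudef]; exact hi1
    have hi2' : u ≤ 4 * M := by rw [hudef]; exact hi2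
    obtain ⟨w, hwdef⟩ : ∃ w : ℝ, w = u⁻¹ := ⟨_, rfl⟩
    have hw0 : 0 < w := by rw [hwdef]; exact inv_pos.2 hu0
    have hMw : M * w ≤ 1 := by
      have h := mul_le_mul_of_nonneg_right hi1' hw0.le
      have h2 : u * w = 1 := by rw [hwdef, mul_inv_cancel₀ hu0.ne']
      linarith
    obtain ⟨e, hedef⟩ : ∃ e : EuclideanSpace ℝ (Fin d), e = ‖ξ‖⁻¹ • ξ := ⟨_, rfl⟩
    have he : ‖e‖ = 1 := by
      rw [hedef, norm_smul, norm_inv, norm_norm, inv_mul_cancel₀ (by rw [← hMdef]; exact hM0.ne')]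
    obtain ⟨ctr, hctrdef⟩ : ∃ c : EuclideanSpace ℝ (Fin d), c = ((3/4) * w) • e := ⟨_, rfl⟩
    have hctr_norm : ‖ctr‖ = (3/4) * w := by
      rw [hctrdef, norm_smul, he, mul_one, Real.norm_eq_abs, abs_of_pos (by positivity)]
    obtain ⟨ρ, hρdef⟩ : ∃ r : ℝ, r = w / 8 := ⟨_, rfl⟩
    have hρ0 : 0 < ρ := by rw [hρdef]; positivity
    have hinner_ctr : (inner ℝ ξ ctr : ℝ) = (3/4) * w * M := by
      rw [hctrdef, real_inner_smul_right, hedef, real_inner_smul_right,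
        real_inner_self_eq_norm_sq, ← hMdef, sq, inv_mul_cancel_left₀ hM0.ne']
    have hBprop : ∀ z ∈ closedBall ctr ρ, (5/8) * w ≤ ‖z‖ ∧ ‖z‖ ≤ (7/8) * w ∧
        (1/2) * w * M ≤ (inner ℝ ξ z : ℝ) ∧ (inner ℝ ξ z : ℝ) ≤ 1 := by
      intro z hz
      rw [mem_closedBall, dist_eq_norm] at hz
      have hn1 : ‖z‖ ≤ (7/8) * w := by
        have h := norm_add_le ctr (z - ctr)
        rw [add_sub_cancel, hctr_norm] at h
        linarith
      have hn2 : (5/8) * w ≤ ‖z‖ := by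
        have h := norm_add_le z (ctr - z)
        rw [add_sub_cancel, hctr_norm, norm_sub_rev] at h
        linarith
      have hip : (inner ℝ ξ z : ℝ) = (inner ℝ ξ ctr : ℝ) + (inner ℝ ξ (z - ctr) : ℝ) := by
        rw [← inner_add_right]
        congr 1
        abel
      have hip_bound : |(inner ℝ ξ (z - ctr) : ℝ)| ≤ M * ρ := by
        refine le_trans (abs_real_inner_le_norm _ _) ?_
        rw [← hMdef]
        exact mul_le_mul_of_nonneg_left hz hM0.le
      have habs := abs_le.mp hip_bound
      rw [hρdef] at habs
      refine ⟨hn2, hn1, ?_, ?_⟩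
      · rw [hip, hinner_ctr]
        linarith [habs.1, (mul_pos hw0 hM0).le]
      · rw [hip, hinner_ctr]
        linarith [habs.2, hMw, (mul_pos hw0 hM0).le]
    have hBS : ∀ z ∈ closedBall ctr ρ, z ∈ A i₀ := by
      intro z hz
      obtain ⟨h1, h2, _, _⟩ := hBprop z hz
      constructor
      · rw [ha_conv i₀]
        have h : ((2:ℝ) * 4 ^ i₀)⁻¹ = w / 2 := by
          rw [hwdef, hudef, mul_inv]
          ring
        rw [h]
        linarith
      · rw [hb_conv i₀, ← hudef, ← hwdef]
        linarith
    have hptwise : ∀ z ∈ closedBall ctr ρ,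
        ENNReal.ofReal (u ^ ((d:ℝ) + α) * (w ^ 2 * M ^ 2 / 32)) ≤
          S.indicator dens z * ENNReal.ofReal (1 - Real.cos (inner ℝ ξ z)) := by
      intro z hz
      obtain ⟨h1, h2, h3, h4⟩ := hBprop z hz
      have hzS : z ∈ S := by
        obtain ⟨ha', hb'⟩ := hBS z hz
        exact ⟨i₀, ha', hb'⟩
      rw [Set.indicator_of_mem hzS dens]
      simp only [hdensdef]
      have hz_pos : 0 < ‖z‖ := by linarith [h1, hw0]
      have hdens_lb : u ^ ((d:ℝ) + α) ≤ ‖z‖ ^ p := by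
        have hzw : ‖z‖ ≤ w := by linarith
        have h := Real.rpow_le_rpow_of_nonpos hz_pos hzw hp_nonpos
        rwa [hwdef, hpdef, inv_rpow_neg hu0.le ((d:ℝ) + α)] at h
      have hcos_lb : w ^ 2 * M ^ 2 / 32 ≤ 1 - Real.cos (inner ℝ ξ z) := by
        have ht1 : |(inner ℝ ξ z : ℝ)| ≤ 1 := by
          rw [abs_le]
          refine ⟨?_, h4⟩
          linarith [h3, (mul_pos hw0 hM0).le]
        have h := sq_div_eight_le_one_sub_cos ht1
        nlinarith [h, h3, mul_pos hw0 hM0]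
      rw [← ENNReal.ofReal_mul (Real.rpow_nonneg (norm_nonneg z) p)]
      exact ENNReal.ofReal_le_ofReal
        (mul_le_mul hdens_lb hcos_lb (by positivity) (Real.rpow_nonneg (norm_nonneg z) p))
    have hvolB : volume (closedBall ctr ρ) = ENNReal.ofReal (ρ ^ d * v) := by
      rw [Measure.addHaar_closedBall _ _ hρ0.le, hvol_eq, finrank_euclideanSpace_fin,
        ← ENNReal.ofReal_mul (by positivity)]
    have hchain : ENNReal.ofReal (u ^ ((d:ℝ) + α) * (w ^ 2 * M ^ 2 / 32)) *
        volume (closedBall ctr ρ) ≤ L ξ := by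
      calc ENNReal.ofReal (u ^ ((d:ℝ) + α) * (w ^ 2 * M ^ 2 / 32)) * volume (closedBall ctr ρ)
          = ∫⁻ _ in closedBall ctr ρ,
              ENNReal.ofReal (u ^ ((d:ℝ) + α) * (w ^ 2 * M ^ 2 / 32)) ∂volume := by
            rw [setLIntegral_const]
      _ ≤ ∫⁻ z in closedBall ctr ρ,
              S.indicator dens z * ENNReal.ofReal (1 - Real.cos (inner ℝ ξ z)) ∂volume :=
            setLIntegral_mono' measurableSet_closedBall hptwise
      _ ≤ L ξ := setLIntegral_le_lintegral _ _
    have hreal : clow * M ^ α ≤ u ^ ((d:ℝ) + α) * (w ^ 2 * M ^ 2 / 32) * (ρ ^ d * v) := by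
      have k1 : u ^ ((d:ℝ) + α) * (u⁻¹) ^ d = u ^ α := rpow_mul_pow_inv hu0 d α
      have k2 : u ^ α * (u⁻¹) ^ 2 = u ^ (α - 2) := by
        rw [inv_pow, ← Real.rpow_natCast u 2, ← Real.rpow_neg hu0.le, ← Real.rpow_add hu0]
        norm_num [sub_eq_add_neg]
      have e1 : u ^ ((d:ℝ) + α) * (w ^ 2 * M ^ 2 / 32) * (ρ ^ d * v)
          = u ^ (α - 2) * (M ^ 2 * v) / (32 * 8 ^ d) := by
        rw [hρdef, hwdef, div_pow, ← k2, ← k1]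
        ring
      rw [e1]
      have h5 : ((4:ℝ) * M) ^ (α - 2) ≤ u ^ (α - 2) :=
        Real.rpow_le_rpow_of_nonpos hu0 hi2' (by linarith)
      have h6 : ((4:ℝ) * M) ^ (α - 2) = (4:ℝ) ^ (α - 2) * M ^ (α - 2) :=
        Real.mul_rpow (by norm_num) hM0.le
      have h7 : M ^ (α - 2) * M ^ 2 = M ^ α := by
        rw [← Real.rpow_natCast M 2, ← Real.rpow_add hM0]
        norm_num
      have h9 : (4:ℝ) ^ (α - 2) * M ^ (α - 2) * (M ^ 2 * v) ≤ u ^ (α - 2) * (M ^ 2 * v) := by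
        rw [← h6]
        refine mul_le_mul_of_nonneg_right h5 ?_
        exact mul_nonneg (by positivity) hv_pos.le
      rw [div_eq_mul_inv]
      calc clow * M ^ α
          = (4:ℝ) ^ (α - 2) * M ^ (α - 2) * (M ^ 2 * v) * (32 * 8 ^ d)⁻¹ := by
            rw [hclowdef, ← h7]; ring
      _ ≤ u ^ (α - 2) * (M ^ 2 * v) * (32 * 8 ^ d)⁻¹ :=
            mul_le_mul_of_nonneg_right h9 (by positivity)
    calc ENNReal.ofReal (clow * M ^ α)
        ≤ ENNReal.ofReal (u ^ ((d:ℝ) + α) * (w ^ 2 * M ^ 2 / 32) * (ρ ^ d * v)) :=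
          ENNReal.ofReal_le_ofReal hreal
    _ = ENNReal.ofReal (u ^ ((d:ℝ) + α) * (w ^ 2 * M ^ 2 / 32)) * ENNReal.ofReal (ρ ^ d * v) :=
          ENNReal.ofReal_mul (mul_nonneg (Real.rpow_nonneg hu0.le _) (by positivity))
    _ = ENNReal.ofReal (u ^ ((d:ℝ) + α) * (w ^ 2 * M ^ 2 / 32)) * volume (closedBall ctr ρ) := by
          rw [hvolB]
    _ ≤ L ξ := hchain
  -- ASSEMBLY
  refine ⟨max (max Cup clow⁻¹) 1, le_max_right _ _, fun ξ hξ => ?_⟩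
  have hMα_nonneg : (0:ℝ) ≤ ‖ξ‖ ^ α := Real.rpow_nonneg (norm_nonneg ξ) α
  have hLne : L ξ ≠ ⊤ := (lt_of_le_of_lt (hupper ξ hξ) ENNReal.ofReal_lt_top).ne
  have hub : q ξ ≤ Cup * ‖ξ‖ ^ α := by
    rw [hqL ξ]
    exact ENNReal.toReal_le_of_le_ofReal (mul_nonneg hCup0.le hMα_nonneg) (hupper ξ hξ)
  have hlb : clow * ‖ξ‖ ^ α ≤ q ξ := by
    rw [hqL ξ]
    have h := ENNReal.toReal_mono hLne (hlower ξ hξ)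
    rwa [ENNReal.toReal_ofReal (mul_nonneg hclow0.le hMα_nonneg)] at h
  have hc_pos : (0:ℝ) < max (max Cup clow⁻¹) 1 := lt_of_lt_of_le one_pos (le_max_right _ _)
  constructor
  · have h1 : clow⁻¹ ≤ max (max Cup clow⁻¹) 1 :=
      le_trans (le_max_right Cup clow⁻¹) (le_max_left _ _)
    have h2 : (max (max Cup clow⁻¹) 1)⁻¹ ≤ clow := by
      rw [inv_le_comm₀ hc_pos hclow0]
      exact h1
    exact le_trans (mul_le_mul_of_nonneg_right h2 hMα_nonneg) hlb
  · have h1 : Cup ≤ max (max Cup clow⁻¹) 1 :=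
      le_trans (le_max_left Cup clow⁻¹) (le_max_left _ _)
    exact le_trans hub (mul_le_mul_of_nonneg_right h1 hMα_nonneg)
end
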